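/- arXiv:1602.06268 — 5 statements merged into one kernel-verified Lean document; each statement's English description precedes it below -/
import Mathlib

section
/- For every Ĉ > 0, T > 0 and M₁ > 0 there exists M > 0 such that the following holds: for every ν > 0, every β ∈ (0,1), and every data (h, η, F) satisfying the hypotheses of the quasilinear existence theorem (h ∈ C^{2+β}_b; ∂_t F, ∂_x F, ∂_y F, ∂_t η, ∂_x η continuous; |η| + [η]ˣ_β + [η]ᵗ_{β/2} and [F]ᵗ_{β/2} + [F]ˣ_β + [F]ʸ_β/(1+|y|) finite) with the growth bound |F(t,x,y)| ≤ Ĉ(1+|y|) for all (t,x,y) and sup_{x∈ℝⁿ} |h(x)| ≤ M₁, every solution y ∈ C^{1,2}_b([0,T]×ℝⁿ) of ∂_t y = ν Δy − ((η+y),∇)y + F(t,x,y), y(0,·) = h, satisfies sup_{[0,T]×ℝⁿ} |y(t,x)| ≤ M. In particular the bound M is independent of the viscosity ν. -/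
open Set MeasureTheory intervalIntegral

noncomputable def dirDeriv {n : ℕ} (f : (Fin n → ℝ) → Fin n → ℝ) (x u : Fin n → ℝ) :
    Fin n → ℝ :=
  fderiv ℝ f x u

noncomputable def lap {n : ℕ} (f : (Fin n → ℝ) → Fin n → ℝ) (x : Fin n → ℝ) : Fin n → ℝ :=
  ∑ j : Fin n, fderiv ℝ (fun z => fderiv ℝ f z (Pi.single j 1)) x (Pi.single j 1)

/-- The class `C^{1,2}_b([0,T]×ℝⁿ)`: bounded, continuously differentiable once in `t`
(on `[0,T]`) and twice in `x`, with bounded derivatives. -/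
def C12b {n : ℕ} (T : ℝ) (y : ℝ → (Fin n → ℝ) → Fin n → ℝ) : Prop :=
  ContinuousOn (fun p : ℝ × (Fin n → ℝ) => y p.1 p.2)
    (Icc (0:ℝ) T ×ˢ (univ : Set (Fin n → ℝ))) ∧
  (∀ t ∈ Icc (0:ℝ) T, ContDiff ℝ 2 (y t)) ∧
  (∀ x : Fin n → ℝ, ∀ t ∈ Icc (0:ℝ) T,
    DifferentiableWithinAt ℝ (fun s => y s x) (Icc (0:ℝ) T) t) ∧
  ContinuousOn (fun p : ℝ × (Fin n → ℝ) =>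
      derivWithin (fun s => y s p.2) (Icc (0:ℝ) T) p.1)
    (Icc (0:ℝ) T ×ˢ (univ : Set (Fin n → ℝ))) ∧
  ContinuousOn (fun p : ℝ × (Fin n → ℝ) => fderiv ℝ (y p.1) p.2)
    (Icc (0:ℝ) T ×ˢ (univ : Set (Fin n → ℝ))) ∧
  ContinuousOn (fun p : ℝ × (Fin n → ℝ) => fderiv ℝ (fun z => fderiv ℝ (y p.1) z) p.2)
    (Icc (0:ℝ) T ×ˢ (univ : Set (Fin n → ℝ))) ∧
  ∃ M : ℝ, ∀ t ∈ Icc (0:ℝ) T, ∀ x,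
    ‖y t x‖ ≤ M ∧ ‖derivWithin (fun s => y s x) (Icc (0:ℝ) T) t‖ ≤ M ∧
    ‖fderiv ℝ (y t) x‖ ≤ M ∧ ‖fderiv ℝ (fun z => fderiv ℝ (y t) z) x‖ ≤ M

/-- `h ∈ C^{2+β}_b(ℝⁿ,ℝⁿ)`. -/
def Holder2b {n : ℕ} (β : ℝ) (h : (Fin n → ℝ) → Fin n → ℝ) : Prop :=
  ContDiff ℝ 2 h ∧
  (∃ M : ℝ, ∀ x, ‖h x‖ ≤ M ∧ ‖fderiv ℝ h x‖ ≤ M ∧ ‖fderiv ℝ (fderiv ℝ h) x‖ ≤ M) ∧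
  (∃ Ch : ℝ, ∀ x x', 0 < ‖x - x'‖ → ‖x - x'‖ < 1 →
    ‖fderiv ℝ (fderiv ℝ h) x - fderiv ℝ (fderiv ℝ h) x'‖ ≤ Ch * ‖x - x'‖ ^ β)

/-- The partial derivatives `∂_t F`, `∂_x F`, `∂_y F`, `∂_t η`, `∂_x η` exist and are
continuous on `[0,T]`. -/
def QDataPartials {n : ℕ} (T : ℝ) (η : ℝ → (Fin n → ℝ) → Fin n → ℝ)
    (F : ℝ → (Fin n → ℝ) → (Fin n → ℝ) → Fin n → ℝ) : Prop :=
  (∀ (x v : Fin n → ℝ), ∀ t ∈ Icc (0:ℝ) T,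
    DifferentiableWithinAt ℝ (fun s => F s x v) (Icc (0:ℝ) T) t) ∧
  ContinuousOn (fun p : ℝ × (Fin n → ℝ) × (Fin n → ℝ) =>
      derivWithin (fun s => F s p.2.1 p.2.2) (Icc (0:ℝ) T) p.1)
    (Icc (0:ℝ) T ×ˢ (univ : Set ((Fin n → ℝ) × (Fin n → ℝ)))) ∧
  (∀ t ∈ Icc (0:ℝ) T, ∀ v, Differentiable ℝ (fun x => F t x v)) ∧
  ContinuousOn (fun p : ℝ × (Fin n → ℝ) × (Fin n → ℝ) =>
      fderiv ℝ (fun x => F p.1 x p.2.2) p.2.1)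
    (Icc (0:ℝ) T ×ˢ (univ : Set ((Fin n → ℝ) × (Fin n → ℝ)))) ∧
  (∀ t ∈ Icc (0:ℝ) T, ∀ x, Differentiable ℝ (fun v => F t x v)) ∧
  ContinuousOn (fun p : ℝ × (Fin n → ℝ) × (Fin n → ℝ) =>
      fderiv ℝ (fun v => F p.1 p.2.1 v) p.2.2)
    (Icc (0:ℝ) T ×ˢ (univ : Set ((Fin n → ℝ) × (Fin n → ℝ)))) ∧
  (∀ x : Fin n → ℝ, ∀ t ∈ Icc (0:ℝ) T,
    DifferentiableWithinAt ℝ (fun s => η s x) (Icc (0:ℝ) T) t) ∧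
  ContinuousOn (fun p : ℝ × (Fin n → ℝ) =>
      derivWithin (fun s => η s p.2) (Icc (0:ℝ) T) p.1)
    (Icc (0:ℝ) T ×ˢ (univ : Set (Fin n → ℝ))) ∧
  (∀ t ∈ Icc (0:ℝ) T, Differentiable ℝ (η t)) ∧
  ContinuousOn (fun p : ℝ × (Fin n → ℝ) => fderiv ℝ (η p.1) p.2)
    (Icc (0:ℝ) T ×ˢ (univ : Set (Fin n → ℝ)))

/-- `|η| + [η]ˣ_β + [η]ᵗ_{β/2} ≤ C₁`. -/
def EtaHolderBound {n : ℕ} (T β C₁ : ℝ) (η : ℝ → (Fin n → ℝ) → Fin n → ℝ) : Prop :=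
  ∃ a b c : ℝ, 0 ≤ a ∧ 0 ≤ b ∧ 0 ≤ c ∧ a + b + c ≤ C₁ ∧
    (∀ t ∈ Icc (0:ℝ) T, ∀ x, ‖η t x‖ ≤ a) ∧
    (∀ t ∈ Icc (0:ℝ) T, ∀ x x', 0 < ‖x - x'‖ → ‖x - x'‖ < 1 →
      ‖η t x - η t x'‖ ≤ b * ‖x - x'‖ ^ β) ∧
    (∀ t ∈ Icc (0:ℝ) T, ∀ t' ∈ Icc (0:ℝ) T, ∀ x,
      ‖η t x - η t' x‖ ≤ c * |t - t'| ^ (β / 2))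

/-- `[F]ᵗ_{β/2} + [F]ˣ_β + [F]ʸ_β ≤ C₂ (1+|y|)`. -/
def FHolderBound {n : ℕ} (T β C₂ : ℝ)
    (F : ℝ → (Fin n → ℝ) → (Fin n → ℝ) → Fin n → ℝ) : Prop :=
  ∃ a b c : ℝ, 0 ≤ a ∧ 0 ≤ b ∧ 0 ≤ c ∧ a + b + c ≤ C₂ ∧
    (∀ t ∈ Icc (0:ℝ) T, ∀ t' ∈ Icc (0:ℝ) T, ∀ x v,
      ‖F t x v - F t' x v‖ ≤ a * (1 + ‖v‖) * |t - t'| ^ (β / 2)) ∧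
    (∀ t ∈ Icc (0:ℝ) T, ∀ x x' v, 0 < ‖x - x'‖ → ‖x - x'‖ < 1 →
      ‖F t x v - F t x' v‖ ≤ b * (1 + ‖v‖) * ‖x - x'‖ ^ β) ∧
    (∀ t ∈ Icc (0:ℝ) T, ∀ x v v', 0 < ‖v - v'‖ → ‖v - v'‖ < 1 →
      ‖F t x v - F t x v'‖ ≤ c * (1 + ‖v‖) * ‖v - v'‖ ^ β)

/-- `y` is a classical bounded solution on `[0,T]×ℝⁿ` of
`∂_t y = ν Δy − ((η+y),∇)y + F(t,x,y)`, `y(0,·) = h`. -/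
def BurgersSol {n : ℕ} (T ν : ℝ) (η : ℝ → (Fin n → ℝ) → Fin n → ℝ)
    (F : ℝ → (Fin n → ℝ) → (Fin n → ℝ) → Fin n → ℝ)
    (h : (Fin n → ℝ) → Fin n → ℝ) (y : ℝ → (Fin n → ℝ) → Fin n → ℝ) : Prop :=
  C12b T y ∧
  (∀ t ∈ Icc (0:ℝ) T, ∀ x, derivWithin (fun s => y s x) (Icc (0:ℝ) T) t =
    ν • lap (y t) x - dirDeriv (y t) x (η t x + y t x) + F t x (y t x)) ∧
  (∀ x, y 0 x = h x)


section Helpers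

open Filter

lemma deriv2_test {g g' : ℝ → ℝ} {c : ℝ} (hg : ∀ s, HasDerivAt g (g' s) s)
    (h0 : g' 0 = 0) (hc : HasDerivAt g' c 0) (hmax : IsLocalMax g 0) : c ≤ 0 := by
  by_contra hpos
  push_neg at hpos
  have hs : Tendsto (slope g' 0) (nhdsWithin 0 {(0:ℝ)}ᶜ) (nhds c) :=
    hasDerivAt_iff_tendsto_slope.1 hc
  have h1 : ∀ᶠ s in nhdsWithin (0:ℝ) {0}ᶜ, 0 < slope g' 0 s :=
    hs.eventually (eventually_gt_nhds hpos)
  have h2 : ∀ᶠ s in nhdsWithin (0:ℝ) (Ioi 0), 0 < g' s := by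
    have := h1.filter_mono (nhdsWithin_mono 0 (fun s hs => by
      simp only [mem_compl_iff, mem_singleton_iff]
      exact ne_of_gt hs))
    filter_upwards [this, self_mem_nhdsWithin] with s hs hs'
    have hs0 : (0:ℝ) < s := hs'
    have heq : slope g' 0 s = g' s / s := by
      simp [slope, h0, div_eq_inv_mul]
    rw [heq] at hs
    have := mul_pos hs hs0
    rw [div_mul_cancel₀ _ (ne_of_gt hs0)] at this
    exact this
  have h3 : ∀ᶠ s in nhdsWithin (0:ℝ) (Ioi 0), g s ≤ g 0 :=
    mem_nhdsWithin_of_mem_nhds hmax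
  obtain ⟨u, hu, hsub⟩ := mem_nhdsGT_iff_exists_Ioo_subset.1 (h2.and h3)
  have hu0 : (0:ℝ) < u := hu
  have hcont : Continuous g := by
    have : Differentiable ℝ g := fun s => (hg s).differentiableAt
    exact this.continuous
  have hmono : StrictMonoOn g (Icc 0 (u/2)) := by
    apply strictMonoOn_of_deriv_pos (convex_Icc _ _) hcont.continuousOn
    intro s hs
    rw [interior_Icc] at hs
    rw [(hg s).deriv]
    exact (hsub ⟨hs.1, lt_of_lt_of_le hs.2 (by linarith)⟩).1
  have h4 : g 0 < g (u/4) :=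
    hmono ⟨le_refl 0, by linarith⟩ ⟨by linarith, by linarith⟩ (by linarith)
  have h5 : g (u/4) ≤ g 0 := (hsub ⟨by linarith, by linarith⟩).2
  linarith

lemma left_deriv_nonneg {f : ℝ → ℝ} {T t₀ d : ℝ} (h0 : 0 < t₀) (hT : t₀ ≤ T)
    (hf : HasDerivWithinAt f d (Icc 0 T) t₀) (hmax : ∀ s ∈ Icc 0 T, f s ≤ f t₀) : 0 ≤ d := by
  have hmono : HasDerivWithinAt f d (Icc 0 t₀) t₀ := hf.mono (Icc_subset_Icc le_rfl hT)
  have hs := hasDerivWithinAt_iff_tendsto_slope.1 hmono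
  rw [Set.Icc_sdiff_right] at hs
  have hne : (nhdsWithin t₀ (Ico 0 t₀)).NeBot := by
    rw [← mem_closure_iff_nhdsWithin_neBot, closure_Ico (ne_of_lt h0)]
    exact ⟨le_of_lt h0, le_refl _⟩
  have hev : ∀ᶠ s in nhdsWithin t₀ (Ico 0 t₀), 0 ≤ slope f t₀ s := by
    filter_upwards [self_mem_nhdsWithin] with s hs'
    have h1 : f s ≤ f t₀ := hmax s ⟨hs'.1, le_trans (le_of_lt hs'.2) hT⟩
    have h2 : s - t₀ < 0 := by linarith [hs'.2]
    simp only [slope, vsub_eq_sub, smul_eq_mul]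
    have : (s - t₀)⁻¹ ≤ 0 := le_of_lt (inv_neg''.2 h2)
    nlinarith
  exact ge_of_tendsto hs hev

lemma fderiv_comp_proj {n : ℕ} {E : Type*} [NormedAddCommGroup E] [NormedSpace ℝ E]
    {f : E → Fin n → ℝ} {x : E} (hf : DifferentiableAt ℝ f x) (i : Fin n) (u : E) :
    fderiv ℝ (fun z => f z i) x u = fderiv ℝ f x u i := by
  have h := ((ContinuousLinearMap.proj (R := ℝ) (φ := fun _ : Fin n => ℝ) i).hasFDerivAt.comp x
    hf.hasFDerivAt).fderiv
  have heq : (fun z => f z i)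
      = (ContinuousLinearMap.proj (R := ℝ) (φ := fun _ : Fin n => ℝ) i) ∘ f := rfl
  rw [heq, h]
  rfl

lemma hasFDerivAt_sumsq {N : ℕ} {E : Type*} [NormedAddCommGroup E] [NormedSpace ℝ E]
    (φ : Fin N → E → ℝ) (Dφ : Fin N → (E →L[ℝ] ℝ)) (z : E)
    (hφ : ∀ i, HasFDerivAt (φ i) (Dφ i) z) :
    HasFDerivAt (fun w => ∑ i, (φ i w)^2) (∑ i, (2 * φ i z) • Dφ i) z := by
  have h : ∀ i, HasFDerivAt (fun w => (φ i w)^2) ((2 * φ i z) • Dφ i) z := by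
    intro i
    have h2 := (hφ i).fun_mul (hφ i)
    have heq : φ i z • Dφ i + φ i z • Dφ i = (2 * φ i z) • Dφ i := by
      rw [two_mul, add_smul]
    rw [heq] at h2
    have hf : (fun w => (φ i w)^2) = (fun w => φ i w * φ i w) := by
      funext w; ring
    rw [hf]
    exact h2
  exact HasFDerivAt.fun_sum (fun i _ => h i)

lemma normsq_le_sumsq {n : ℕ} (Y : Fin n → ℝ) : ‖Y‖^2 ≤ ∑ i, (Y i)^2 := by
  have h1 : ‖Y‖ ≤ Real.sqrt (∑ i, (Y i)^2) := by
    rw [pi_norm_le_iff_of_nonneg (Real.sqrt_nonneg _)]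
    intro i
    have h : |Y i| = Real.sqrt ((Y i)^2) := (Real.sqrt_sq_eq_abs _).symm
    rw [Real.norm_eq_abs, h]
    exact Real.sqrt_le_sqrt
      (Finset.single_le_sum (fun j _ => sq_nonneg (Y j)) (Finset.mem_univ i))
  calc ‖Y‖^2 ≤ Real.sqrt (∑ i, (Y i)^2) ^ 2 := by
        exact pow_le_pow_left₀ (norm_nonneg _) h1 2
    _ = ∑ i, (Y i)^2 := Real.sq_sqrt (Finset.sum_nonneg fun j _ => sq_nonneg _)

end Helpers

set_option maxHeartbeats 12000000 in
/-- A priori sup bound for solutions, depending only on `Ĉ`, `T`, `M₁` and in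
particular independent of the viscosity `ν` (Corollary `cor1`, sup bound). -/
theorem stmt_3 {n : ℕ} (hn : 1 ≤ n) (Chat T M₁ : ℝ)
    (hChat : 0 < Chat) (hT : 0 < T) (hM₁ : 0 < M₁) :
    ∃ M : ℝ, 0 < M ∧ ∀ ν : ℝ, 0 < ν → ∀ β ∈ Ioo (0:ℝ) 1,
    ∀ (h : (Fin n → ℝ) → Fin n → ℝ) (η : ℝ → (Fin n → ℝ) → Fin n → ℝ)
      (F : ℝ → (Fin n → ℝ) → (Fin n → ℝ) → Fin n → ℝ),
    Holder2b β h → QDataPartials T η F →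
    (∃ C₁ : ℝ, EtaHolderBound T β C₁ η) →
    (∃ C₂ : ℝ, FHolderBound T β C₂ F) →
    (∀ t ∈ Icc (0:ℝ) T, ∀ x v, ‖F t x v‖ ≤ Chat * (1 + ‖v‖)) →
    (∀ x, ‖h x‖ ≤ M₁) →
    ∀ y : ℝ → (Fin n → ℝ) → Fin n → ℝ, BurgersSol T ν η F h y →
    ∀ t ∈ Icc (0:ℝ) T, ∀ x, ‖y t x‖ ≤ M := by
  classical
  have hn0 : (0:ℝ) < n := by exact_mod_cast Nat.lt_of_lt_of_le Nat.zero_lt_one hn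
  set C : ℝ := 3 * n * Chat with hCdef
  have hC0 : 0 < C := by positivity
  refine ⟨Real.sqrt ((1 + n * M₁^2) * Real.exp (C * T)), Real.sqrt_pos.2 (by positivity), ?_⟩
  intro ν hν β hβ h η F hh hQD hEta hFb hFg hhM y hy t ht x
  obtain ⟨⟨hy1, hy2, hy3, hy4, hy5, hy6, My0, hMy0⟩, hpde, hy0⟩ := hy
  set My : ℝ := max My0 0 with hMydef
  have hMy : ∀ s ∈ Icc (0:ℝ) T, ∀ z, ‖y s z‖ ≤ My :=
    fun s hs z => le_trans (hMy0 s hs z).1 (le_max_left _ _)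
  have hMynn : 0 ≤ My := le_max_right _ _
  obtain ⟨C₁, aη, bη, cη, haη0, _, _, _, hηa, _, _⟩ := hEta
  set U : ℝ := aη + My with hUdef
  have hU0 : 0 ≤ U := by positivity
  set lam : ℝ := 2 * n * ν + n * U + 1 with hlamdef
  have hlam0 : 0 < lam := by positivity
  -- the key maximum principle claim
  have key : ∀ ε ∈ Ioo (0:ℝ) 1, ∀ s ∈ Icc (0:ℝ) T, ∀ z : Fin n → ℝ,
      Real.exp (-(C*s)) * (1 + ∑ i, (y s z i)^2)
        - ε * (Real.exp (lam*s) * (1 + ∑ j, (z j)^2))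
      ≤ 1 + n * M₁^2 := by
    intro ε hε s₁ hs₁ z₁
    set Q : (Fin n → ℝ) → ℝ := fun z => ∑ j, (z j)^2 with hQdef
    have hQnn : ∀ z, 0 ≤ Q z := fun z => Finset.sum_nonneg fun j _ => sq_nonneg _
    have hQge : ∀ z : Fin n → ℝ, ‖z‖^2 ≤ Q z := fun z => normsq_le_sumsq z
    set ψ : ℝ × (Fin n → ℝ) → ℝ := fun p =>
      Real.exp (-(C*p.1)) * (1 + ∑ i, (y p.1 p.2 i)^2)
        - ε * (Real.exp (lam*p.1) * (1 + Q p.2)) with hψdef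
    obtain ⟨R, hRdef⟩ : ∃ R : ℝ, R = Real.sqrt ((2 + n*My^2)/ε) + 1 := ⟨_, rfl⟩
    have hR0 : 0 < R := by
      rw [hRdef]
      have := Real.sqrt_nonneg ((2 + (n:ℝ)*My^2)/ε)
      linarith
    have hRbig : 2 + n*My^2 + ε ≤ ε * (1 + R^2) := by
      have h1 : Real.sqrt ((2+(n:ℝ)*My^2)/ε) ^ 2 = (2+(n:ℝ)*My^2)/ε :=
        Real.sq_sqrt (div_nonneg (by positivity) hε.1.le)
      have h2 : ε * ((2+(n:ℝ)*My^2)/ε) = 2+(n:ℝ)*My^2 := mul_div_cancel₀ _ (ne_of_gt hε.1)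
      rw [hRdef]
      nlinarith [Real.sqrt_nonneg ((2+(n:ℝ)*My^2)/ε), hε.1]
    -- bound for the sum of squares of y
    have hwle : ∀ s ∈ Icc (0:ℝ) T, ∀ z, (∑ i, (y s z i)^2) ≤ n * My^2 := by
      intro s hs z
      calc ∑ i, (y s z i)^2 ≤ ∑ _i : Fin n, My^2 := by
            apply Finset.sum_le_sum
            intro i _
            have h1 : ‖y s z i‖ ≤ ‖y s z‖ := norm_le_pi_norm _ i
            have h2 : |y s z i| ≤ My := le_trans h1 (hMy s hs z)
            calc (y s z i)^2 = |y s z i|^2 := (sq_abs _).symm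
              _ ≤ My^2 := pow_le_pow_left₀ (abs_nonneg _) h2 2
        _ = n * My^2 := by rw [Finset.sum_const, Finset.card_univ, Fintype.card_fin]; ring
    have hwnn : ∀ s z, (0:ℝ) ≤ ∑ i, (y s z i)^2 :=
      fun s z => Finset.sum_nonneg fun i _ => sq_nonneg _
    -- outside the ball ψ is very negative
    have hψout : ∀ s ∈ Icc (0:ℝ) T, ∀ z : Fin n → ℝ, R ≤ ‖z‖ → ψ (s, z) < -1 := by
      intro s hs z hz
      have h1 : Real.exp (-(C*s)) ≤ 1 := by
        rw [Real.exp_le_one_iff]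
        have : 0 ≤ C * s := mul_nonneg hC0.le hs.1
        linarith
      have h2 : (1:ℝ) ≤ Real.exp (lam*s) := by
        rw [Real.one_le_exp_iff]
        exact mul_nonneg hlam0.le hs.1
      have h3 : R^2 ≤ Q z := le_trans (pow_le_pow_left₀ hR0.le hz 2) (hQge z)
      have h4 : Real.exp (-(C*s)) * (1 + ∑ i, (y s z i)^2) ≤ 1 + n * My^2 := by
        have := hwle s hs z
        have h5 : (0:ℝ) ≤ 1 + ∑ i, (y s z i)^2 := by linarith [hwnn s z]
        nlinarith [Real.exp_pos (-(C*s))]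
      have h6 : ε * (1 + R^2) ≤ ε * (Real.exp (lam*s) * (1 + Q z)) := by
        apply mul_le_mul_of_nonneg_left _ hε.1.le
        nlinarith [hQnn z]
      show Real.exp (-(C*s)) * (1 + ∑ i, (y s z i)^2)
        - ε * (Real.exp (lam*s) * (1 + Q z)) < -1
      linarith [hε.1, hε.2]
    -- the compact cylinder
    set K : Set (ℝ × (Fin n → ℝ)) := Icc (0:ℝ) T ×ˢ Metric.closedBall 0 R with hKdef
    have hKc : IsCompact K := (isCompact_Icc).prod (isCompact_closedBall _ _)
    have hKne : K.Nonempty :=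
      ⟨(0, 0), ⟨⟨le_refl 0, hT.le⟩, Metric.mem_closedBall_self hR0.le⟩⟩
    have hKmem : ∀ s ∈ Icc (0:ℝ) T, ∀ z : Fin n → ℝ, ‖z‖ ≤ R → (s, z) ∈ K := by
      intro s hs z hz
      refine ⟨hs, ?_⟩
      rw [Metric.mem_closedBall, dist_zero_right]
      exact hz
    have hψcont : ContinuousOn ψ K := by
      have hsub : K ⊆ Icc (0:ℝ) T ×ˢ (univ : Set (Fin n → ℝ)) := fun p hp => ⟨hp.1, mem_univ _⟩
      apply ContinuousOn.sub
      · apply ContinuousOn.mul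
        · exact (Real.continuous_exp.comp (continuous_const.mul continuous_fst).neg).continuousOn
        · apply ContinuousOn.add continuousOn_const
          apply continuousOn_finset_sum
          intro i _
          exact ((continuous_apply i).comp_continuousOn (hy1.mono hsub)).pow 2
      · apply Continuous.continuousOn
        apply Continuous.mul continuous_const
        apply Continuous.mul
        · exact Real.continuous_exp.comp (continuous_const.mul continuous_fst)
        · exact continuous_const.add
            (continuous_finset_sum _ fun j _ => ((continuous_apply j).comp continuous_snd).pow 2)
    obtain ⟨p₀, hp₀K, hp₀max⟩ := hKc.exists_isMaxOn hKne hψcont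
    obtain ⟨t₀, x₀⟩ := p₀
    have ht₀ : t₀ ∈ Icc (0:ℝ) T := hp₀K.1
    have hψ00 : -1 < ψ (0, 0) := by
      have h3 : Q (0 : Fin n → ℝ) = 0 := by simp [hQdef]
      show -1 < Real.exp (-(C*0)) * (1 + ∑ i, (y 0 (0:Fin n → ℝ) i)^2)
        - ε * (Real.exp (lam*0) * (1 + Q 0))
      have e1 : -(C*(0:ℝ)) = 0 := by ring
      have e2 : lam*(0:ℝ) = 0 := by ring
      rw [e1, e2, Real.exp_zero, h3]
      have := hwnn 0 (0 : Fin n → ℝ)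
      nlinarith [hε.2, hε.1]
    have h00max : ψ (0,0) ≤ ψ (t₀, x₀) :=
      hp₀max ⟨⟨le_refl 0, hT.le⟩, Metric.mem_closedBall_self hR0.le⟩
    have hx₀ : ‖x₀‖ < R := by
      by_contra hout
      push_neg at hout
      have := hψout t₀ ht₀ x₀ hout
      linarith
    have hx₀R : ‖x₀‖ ≤ R := by
      have := hp₀K.2
      rwa [Metric.mem_closedBall, dist_zero_right] at this
    -- the max value is at most 1 + n M₁²
    have hmaxle : ψ (t₀, x₀) ≤ 1 + n*M₁^2 := by
      rcases eq_or_lt_of_le ht₀.1 with h0 | h0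
      · -- t₀ = 0 : initial data
        show Real.exp (-(C*t₀)) * (1 + ∑ i, (y t₀ x₀ i)^2)
          - ε * (Real.exp (lam*t₀) * (1 + Q x₀)) ≤ 1 + n*M₁^2
        rw [← h0]
        have e1 : -(C*(0:ℝ)) = 0 := by ring
        rw [e1, Real.exp_zero]
        have h2 : ∀ i, y 0 x₀ i = h x₀ i := fun i => by rw [hy0]
        have h3 : ∑ i, (y 0 x₀ i)^2 ≤ n * M₁^2 := by
          calc ∑ i, (y 0 x₀ i)^2 ≤ ∑ _i : Fin n, M₁^2 := by
                apply Finset.sum_le_sum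
                intro i _
                rw [h2 i]
                have ha : ‖h x₀ i‖ ≤ ‖h x₀‖ := norm_le_pi_norm _ i
                have hb : |h x₀ i| ≤ M₁ := le_trans ha (hhM x₀)
                calc (h x₀ i)^2 = |h x₀ i|^2 := (sq_abs _).symm
                  _ ≤ M₁^2 := pow_le_pow_left₀ (abs_nonneg _) hb 2
            _ = n * M₁^2 := by rw [Finset.sum_const, Finset.card_univ, Fintype.card_fin]; ring
        have h4 : 0 ≤ ε * (Real.exp (lam*0) * (1 + Q x₀)) := by
          apply mul_nonneg hε.1.le
          apply mul_nonneg (Real.exp_pos _).le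
          linarith [hQnn x₀]
        linarith
      · -- t₀ > 0 : contradiction via maximum principle
        exfalso
        -- abbreviations
        obtain ⟨aa, haadef⟩ : ∃ a : ℝ, a = Real.exp (-(C*t₀)) := ⟨_, rfl⟩
        obtain ⟨bb, hbbdef⟩ : ∃ b : ℝ, b = ε * Real.exp (lam*t₀) := ⟨_, rfl⟩
        have haa0 : 0 < aa := haadef ▸ Real.exp_pos _
        have hbb0 : 0 < bb := hbbdef ▸ mul_pos hε.1 (Real.exp_pos _)
        set Y : Fin n → ℝ := y t₀ x₀ with hYdef
        set uu : Fin n → ℝ := η t₀ x₀ + y t₀ x₀ with huudef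
        have huuU : ‖uu‖ ≤ U := by
          rw [huudef, hUdef]
          exact le_trans (norm_add_le _ _) (add_le_add (hηa t₀ ht₀ x₀) (hMy t₀ ht₀ x₀))
        have hyC : ContDiff ℝ 2 (y t₀) := hy2 t₀ ht₀
        have hyD : Differentiable ℝ (y t₀) := hyC.differentiable (by norm_num)
        set Yi : Fin n → (Fin n → ℝ) → ℝ := fun i z => y t₀ z i with hYidef
        have hYiC : ∀ i, ContDiff ℝ 2 (Yi i) := fun i =>
          (ContinuousLinearMap.proj (R := ℝ) (φ := fun _ : Fin n => ℝ) i).contDiff.comp hyC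
        have hYiD : ∀ i, Differentiable ℝ (Yi i) := fun i => (hYiC i).differentiable (by norm_num)
        set e : Fin n → (Fin n → ℝ) := fun j => Pi.single j 1 with hedef
        set W : (Fin n → ℝ) → ℝ := fun z => ∑ i, (Yi i z)^2 with hWdef
        set Φ : (Fin n → ℝ) → ℝ := fun z => aa * (1 + W z) - bb * (1 + Q z) with hΦdef
        have hΦψ : ∀ z, Φ z = ψ (t₀, z) := by
          intro z
          show aa * (1 + W z) - bb * (1 + Q z)
            = Real.exp (-(C*t₀)) * (1 + ∑ i, (y t₀ z i)^2)
              - ε * (Real.exp (lam*t₀) * (1 + Q z))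
          rw [haadef, hbbdef]
          have hWz : W z = ∑ i, (y t₀ z i)^2 := rfl
          rw [hWz]; ring
        -- local max of Φ at x₀
        have hlocmax : IsLocalMax Φ x₀ := by
          have hball : ∀ z ∈ Metric.ball x₀ (R - ‖x₀‖), Φ z ≤ Φ x₀ := by
            intro z hz
            rw [hΦψ, hΦψ]
            apply hp₀max
            apply hKmem t₀ ht₀
            have h1 : ‖z - x₀‖ < R - ‖x₀‖ := by
              rwa [Metric.mem_ball, dist_eq_norm] at hz
            calc ‖z‖ = ‖(z - x₀) + x₀‖ := by ring_nf
              _ ≤ ‖z - x₀‖ + ‖x₀‖ := norm_add_le _ _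
              _ ≤ R := by linarith
          exact Filter.eventually_of_mem (Metric.ball_mem_nhds x₀ (by linarith)) hball
        -- smoothness of Φ
        have hWC : ContDiff ℝ 2 W := ContDiff.sum (fun i _ => (hYiC i).pow 2)
        have hQC : ContDiff ℝ 2 Q := ContDiff.sum (fun j _ =>
          ((ContinuousLinearMap.proj (R := ℝ) (φ := fun _ : Fin n => ℝ) j)).contDiff.pow 2)
        have hΦC : ContDiff ℝ 2 Φ :=
          (contDiff_const.mul (contDiff_const.add hWC)).sub
            (contDiff_const.mul (contDiff_const.add hQC))
        -- derivative structure of W, Q, Φ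
        have hW' : ∀ z, HasFDerivAt W
            (∑ i, (2 * Yi i z) • fderiv ℝ (Yi i) z) z := fun z =>
          hasFDerivAt_sumsq Yi (fun i => fderiv ℝ (Yi i) z) z
            (fun i => (hYiD i z).hasFDerivAt)
        have hQ' : ∀ z : Fin n → ℝ, HasFDerivAt Q
            (∑ k, (2 * z k) • (ContinuousLinearMap.proj (R := ℝ) (φ := fun _ : Fin n => ℝ) k)) z :=
          fun z => hasFDerivAt_sumsq (fun k w => w k)
            (fun k => ContinuousLinearMap.proj k) z
            (fun k => (ContinuousLinearMap.proj (R := ℝ) (φ := fun _ : Fin n => ℝ) k).hasFDerivAt)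
        have hΦ' : ∀ z, HasFDerivAt Φ
            (aa • (∑ i, (2 * Yi i z) • fderiv ℝ (Yi i) z)
              - bb • (∑ k, (2 * z k) • (ContinuousLinearMap.proj (R := ℝ) (φ := fun _ : Fin n => ℝ) k))) z :=
          fun z => (((hW' z).const_add 1).const_mul aa).sub (((hQ' z).const_add 1).const_mul bb)
        -- first order condition
        have hgradCLM : fderiv ℝ Φ x₀ = 0 := hlocmax.fderiv_eq_zero
        have hgradu : aa * (∑ i, 2 * Yi i x₀ * fderiv ℝ (Yi i) x₀ uu)
            = bb * (∑ j, 2 * x₀ j * uu j) := by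
          have h2 := (hΦ' x₀).fderiv
          rw [hgradCLM] at h2
          have h3 := congrArg (fun L : (Fin n → ℝ) →L[ℝ] ℝ => L uu) h2
          simp only [ContinuousLinearMap.zero_apply, ContinuousLinearMap.sub_apply,
            ContinuousLinearMap.smul_apply, ContinuousLinearMap.sum_apply,
            ContinuousLinearMap.proj_apply, smul_eq_mul] at h3
          have h4 : ∀ i, 2 * Yi i x₀ * fderiv ℝ (Yi i) x₀ uu
              = (fun i => 2 * Yi i x₀ * fderiv ℝ (Yi i) x₀ uu) i := fun i => rfl
          linarith [h3]
        -- second order condition, direction e j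
        have hsecond : ∀ j : Fin n,
            aa * (∑ i, (2 * Yi i x₀ * fderiv ℝ (fun z => fderiv ℝ (Yi i) z (e j)) x₀ (e j)
              + 2 * (fderiv ℝ (Yi i) x₀ (e j))^2)) - bb * 2 ≤ 0 := by
          intro j
          have hL : ∀ s : ℝ, HasDerivAt (fun s : ℝ => x₀ + s • e j) (e j) s := by
            intro s
            simpa using ((hasDerivAt_id s).smul_const (e j)).const_add x₀
          have hL0 : x₀ + (0:ℝ) • e j = x₀ := by simp
          have hΦd : ∀ z, DifferentiableAt ℝ Φ z := fun z => (hΦ' z).differentiableAt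
          -- the 1-d functions
          set g : ℝ → ℝ := fun s => Φ (x₀ + s • e j) with hgdef
          set g' : ℝ → ℝ := fun s => fderiv ℝ Φ (x₀ + s • e j) (e j) with hg'def
          have hg : ∀ s, HasDerivAt g (g' s) s := by
            intro s
            exact (hΦd (x₀ + s • e j)).hasFDerivAt.comp_hasDerivAt s (hL s)
          have hg'0 : g' 0 = 0 := by
            show fderiv ℝ Φ (x₀ + (0:ℝ) • e j) (e j) = 0
            rw [hL0, hgradCLM]
            rfl
          have hgmax : IsLocalMax g 0 := by
            have htd : Filter.Tendsto (fun s : ℝ => x₀ + s • e j) (nhds 0) (nhds x₀) := by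
              have hcont : Continuous (fun s : ℝ => x₀ + s • e j) :=
                continuous_const.add (continuous_id.smul continuous_const)
              have := hcont.continuousAt (x := (0:ℝ))
              rwa [ContinuousAt, hL0] at this
            have hev := htd.eventually hlocmax
            have hg0 : g 0 = Φ x₀ := by
              show Φ (x₀ + (0:ℝ) • e j) = Φ x₀
              rw [hL0]
            exact hev.mono (fun s hs => by rw [← hg0] at hs; exact hs)
          -- differentiate g'
          have hΦ1 : ContDiff ℝ 1 (fderiv ℝ Φ) := hΦC.fderiv_right (by norm_num)
          have hΦ2 : Differentiable ℝ (fun z => fderiv ℝ Φ z (e j)) :=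
            (ContinuousLinearMap.apply ℝ ℝ (e j)).differentiable.comp
              (hΦ1.differentiable one_ne_zero)
          have hc : HasDerivAt g' (fderiv ℝ (fun z => fderiv ℝ Φ z (e j)) x₀ (e j)) 0 := by
            have hl : HasFDerivAt (fun z => fderiv ℝ Φ z (e j))
                (fderiv ℝ (fun z => fderiv ℝ Φ z (e j)) x₀) (x₀ + (0:ℝ) • e j) := by
              rw [hL0]
              exact (hΦ2 x₀).hasFDerivAt
            exact hl.comp_hasDerivAt 0 (hL 0)
          have hcle : fderiv ℝ (fun z => fderiv ℝ Φ z (e j)) x₀ (e j) ≤ 0 :=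
            deriv2_test hg hg'0 hc hgmax
          -- identify the second derivative
          have hfun : (fun z => fderiv ℝ Φ z (e j))
              = (fun z => aa * (∑ i, 2 * Yi i z * fderiv ℝ (Yi i) z (e j)) - bb * (2 * z j)) := by
            funext z
            rw [(hΦ' z).fderiv]
            simp only [ContinuousLinearMap.sub_apply, ContinuousLinearMap.smul_apply,
              ContinuousLinearMap.sum_apply, ContinuousLinearMap.proj_apply, smul_eq_mul]
            have h1 : ∑ k, 2 * z k * e j k = 2 * z j := by
              have h2 : ∑ k, 2 * z k * e j k = 2 * z j * e j j :=
                Finset.sum_eq_single_of_mem j (Finset.mem_univ j)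
                  (fun k _ hk => by rw [hedef]; simp [Pi.single_eq_of_ne hk])
              rw [h2, hedef]
              simp
            rw [h1]
          -- derivative of the identified function
          have hAiD : ∀ i, Differentiable ℝ (fun z => fderiv ℝ (Yi i) z (e j)) := by
            intro i
            have h1 : ContDiff ℝ 1 (fderiv ℝ (Yi i)) := (hYiC i).fderiv_right (by norm_num)
            exact (ContinuousLinearMap.apply ℝ ℝ (e j)).differentiable.comp
              (h1.differentiable one_ne_zero)
          have hsum' : HasFDerivAt
              (fun z => ∑ i, 2 * Yi i z * fderiv ℝ (Yi i) z (e j))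
              (∑ i, ((2 * Yi i x₀) • fderiv ℝ (fun z => fderiv ℝ (Yi i) z (e j)) x₀
                + (fderiv ℝ (Yi i) x₀ (e j)) • ((2:ℝ) • fderiv ℝ (Yi i) x₀))) x₀ := by
            apply HasFDerivAt.fun_sum
            intro i _
            have h1 : HasFDerivAt (fun z => 2 * Yi i z) ((2:ℝ) • fderiv ℝ (Yi i) x₀) x₀ :=
              ((hYiD i x₀).hasFDerivAt).const_mul 2
            have h2 : HasFDerivAt (fun z => fderiv ℝ (Yi i) z (e j))
                (fderiv ℝ (fun z => fderiv ℝ (Yi i) z (e j)) x₀) x₀ :=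
              (hAiD i x₀).hasFDerivAt
            have h3 := h1.mul h2
            have heq : (fun z => 2 * Yi i z * fderiv ℝ (Yi i) z (e j))
                = (fun z => (2 * Yi i z) * fderiv ℝ (Yi i) z (e j)) := rfl
            rw [heq]
            exact h3
          have hlin : HasFDerivAt (fun z : Fin n → ℝ => bb * (2 * z j))
              (bb • ((2:ℝ) • (ContinuousLinearMap.proj (R := ℝ) (φ := fun _ : Fin n => ℝ) j))) x₀ :=
            (((ContinuousLinearMap.proj (R := ℝ) (φ := fun _ : Fin n => ℝ) j).hasFDerivAt).const_mul
              2).const_mul bb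
          have htot := (hsum'.const_mul aa).fun_sub hlin
          have hceq : fderiv ℝ (fun z => fderiv ℝ Φ z (e j)) x₀ (e j)
              = aa * (∑ i, (2 * Yi i x₀ * fderiv ℝ (fun z => fderiv ℝ (Yi i) z (e j)) x₀ (e j)
                + 2 * (fderiv ℝ (Yi i) x₀ (e j))^2)) - bb * 2 := by
            rw [hfun, htot.fderiv]
            simp only [ContinuousLinearMap.sub_apply, ContinuousLinearMap.smul_apply,
              ContinuousLinearMap.add_apply, ContinuousLinearMap.sum_apply,
              ContinuousLinearMap.proj_apply, smul_eq_mul]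
            have hejj : e j j = 1 := by rw [hedef]; simp
            rw [hejj]
            have hsumeq : ∀ i, 2 * Yi i x₀ * fderiv ℝ (fun z => fderiv ℝ (Yi i) z (e j)) x₀ (e j)
                + (fderiv ℝ (Yi i) x₀ (e j)) * (2 * fderiv ℝ (Yi i) x₀ (e j))
                = 2 * Yi i x₀ * fderiv ℝ (fun z => fderiv ℝ (Yi i) z (e j)) x₀ (e j)
                + 2 * (fderiv ℝ (Yi i) x₀ (e j))^2 := by
              intro i; ring
            rw [Finset.sum_congr rfl (fun i _ => hsumeq i)]
            ring
          rw [← hceq]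
          exact hcle
        -- second order: drop the square term
        have hlap2 : ∀ j : Fin n,
            aa * (∑ i, 2 * Yi i x₀ * fderiv ℝ (fun z => fderiv ℝ (Yi i) z (e j)) x₀ (e j))
              ≤ 2 * bb := by
          intro j
          have hs := hsecond j
          have hsplit : ∑ i, (2 * Yi i x₀ * fderiv ℝ (fun z => fderiv ℝ (Yi i) z (e j)) x₀ (e j)
              + 2 * (fderiv ℝ (Yi i) x₀ (e j))^2)
              = (∑ i, 2 * Yi i x₀ * fderiv ℝ (fun z => fderiv ℝ (Yi i) z (e j)) x₀ (e j))
              + ∑ i, 2 * (fderiv ℝ (Yi i) x₀ (e j))^2 := Finset.sum_add_distrib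
          rw [hsplit] at hs
          have ht2 : 0 ≤ ∑ i, 2 * (fderiv ℝ (Yi i) x₀ (e j))^2 :=
            Finset.sum_nonneg fun i _ => by positivity
          nlinarith [mul_nonneg haa0.le ht2]
        -- the Laplacian identity
        have hlapc : ∀ i, lap (y t₀) x₀ i
            = ∑ j, fderiv ℝ (fun z => fderiv ℝ (Yi i) z (e j)) x₀ (e j) := by
          intro i
          have hyD1 : Differentiable ℝ (fun z => fderiv ℝ (y t₀) z) :=
            (hyC.fderiv_right (by norm_num)).differentiable one_ne_zero
          show (∑ j, fderiv ℝ (fun z => fderiv ℝ (y t₀) z (Pi.single j 1)) x₀ (Pi.single j 1)) i = _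
          rw [Finset.sum_apply]
          apply Finset.sum_congr rfl
          intro j _
          have hGd' : Differentiable ℝ (fun z => fderiv ℝ (y t₀) z (Pi.single j 1)) :=
            (ContinuousLinearMap.apply (E := Fin n → ℝ) ℝ (Fin n → ℝ)
              (Pi.single j 1)).differentiable.comp hyD1
          have hGd : DifferentiableAt ℝ (fun z => fderiv ℝ (y t₀) z (Pi.single j 1)) x₀ := hGd' x₀
          rw [← fderiv_comp_proj hGd i (Pi.single j 1)]
          have hfeq : (fun z => fderiv ℝ (y t₀) z (Pi.single j 1) i)
              = (fun z => fderiv ℝ (Yi i) z (e j)) := by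
            funext z
            rw [hedef]
            exact (fderiv_comp_proj (hyD z) i (Pi.single j 1)).symm
          rw [hfeq, hedef]
        -- Laplacian bound
        have hlapbd : aa * (∑ i, 2 * Yi i x₀ * lap (y t₀) x₀ i) ≤ 2 * n * bb := by
          have h1 : ∑ i, 2 * Yi i x₀ * lap (y t₀) x₀ i
              = ∑ j, ∑ i, 2 * Yi i x₀ * fderiv ℝ (fun z => fderiv ℝ (Yi i) z (e j)) x₀ (e j) := by
            rw [Finset.sum_comm]
            apply Finset.sum_congr rfl
            intro i _
            rw [hlapc i, Finset.mul_sum]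
          rw [h1, Finset.mul_sum]
          calc ∑ j, aa * (∑ i, 2 * Yi i x₀ * fderiv ℝ (fun z => fderiv ℝ (Yi i) z (e j)) x₀ (e j))
              ≤ ∑ _j : Fin n, 2 * bb := Finset.sum_le_sum fun j _ => hlap2 j
            _ = n * (2*bb) := by rw [Finset.sum_const, Finset.card_univ, Fintype.card_fin]; ring
            _ = 2 * n * bb := by ring
        -- directional derivative components
        have hddc : ∀ i, dirDeriv (y t₀) x₀ uu i = fderiv ℝ (Yi i) x₀ uu := by
          intro i
          show fderiv ℝ (y t₀) x₀ uu i = _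
          exact (fderiv_comp_proj (hyD x₀) i uu).symm
        -- gradient bound for the transport term
        have hDQb : |∑ j, 2 * x₀ j * uu j| ≤ U * (n + Q x₀) := by
          calc |∑ j, 2 * x₀ j * uu j| ≤ ∑ j, |2 * x₀ j * uu j| :=
              Finset.abs_sum_le_sum_abs _ _
            _ ≤ ∑ j, (1 + (x₀ j)^2) * U := by
              apply Finset.sum_le_sum
              intro j _
              have h1 : |uu j| ≤ U := le_trans (norm_le_pi_norm uu j) huuU
              have h2 : 2 * |x₀ j| ≤ 1 + (x₀ j)^2 := by nlinarith [sq_nonneg (|x₀ j| - 1), sq_abs (x₀ j)]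
              have h3 : |2 * x₀ j * uu j| = 2 * |x₀ j| * |uu j| := by
                rw [abs_mul, abs_mul]
                simp [abs_of_nonneg]
              rw [h3]
              have h4 : 0 ≤ |uu j| := abs_nonneg _
              nlinarith [abs_nonneg (x₀ j)]
            _ = (∑ j, (1 + (x₀ j)^2)) * U := by rw [Finset.sum_mul]
            _ = U * (n + Q x₀) := by
              have h5 : ∑ j : Fin n, (1 + (x₀ j)^2) = n + Q x₀ := by
                rw [Finset.sum_add_distrib, Finset.sum_const, Finset.card_univ,
                  Fintype.card_fin]
                have h6 : Q x₀ = ∑ j, (x₀ j)^2 := rfl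
                rw [h6]
                simp [nsmul_eq_mul]
              rw [h5]
              ring
        -- bound on the F term
        have hFY : ‖F t₀ x₀ Y‖ ≤ Chat * (1 + ‖Y‖) := hFg t₀ ht₀ x₀ Y
        have hFsum : ∑ i, 2 * Yi i x₀ * F t₀ x₀ Y i ≤ C * (1 + W x₀) := by
          have h1 : ∀ i, 2 * Yi i x₀ * F t₀ x₀ Y i ≤ 2 * (‖Y‖ * (Chat * (1 + ‖Y‖))) := by
            intro i
            have hai : |Yi i x₀| ≤ ‖Y‖ := by
              have h2 : Yi i x₀ = Y i := rfl
              rw [h2]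
              exact norm_le_pi_norm Y i
            have hbi : |F t₀ x₀ Y i| ≤ Chat * (1 + ‖Y‖) := by
              have h9 := norm_le_pi_norm (F t₀ x₀ Y) i
              rw [Real.norm_eq_abs] at h9
              exact le_trans h9 hFY
            have h2 : Yi i x₀ * F t₀ x₀ Y i ≤ |Yi i x₀| * |F t₀ x₀ Y i| := by
              rw [← abs_mul]
              exact le_abs_self _
            have h3 : |Yi i x₀| * |F t₀ x₀ Y i| ≤ ‖Y‖ * (Chat * (1 + ‖Y‖)) :=
              mul_le_mul hai hbi (abs_nonneg _) (norm_nonneg _)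
            linarith
          have h4 : ∑ i, 2 * Yi i x₀ * F t₀ x₀ Y i
              ≤ n * (2 * (‖Y‖ * (Chat * (1 + ‖Y‖)))) := by
            calc ∑ i, 2 * Yi i x₀ * F t₀ x₀ Y i
                ≤ ∑ _i : Fin n, 2 * (‖Y‖ * (Chat * (1 + ‖Y‖))) :=
                  Finset.sum_le_sum fun i _ => h1 i
              _ = n * (2 * (‖Y‖ * (Chat * (1 + ‖Y‖)))) := by
                rw [Finset.sum_const, Finset.card_univ, Fintype.card_fin]; ring
          have hWx0 : ‖Y‖^2 ≤ W x₀ := by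
            have h5 : W x₀ = ∑ i, (Y i)^2 := rfl
            rw [h5]
            exact normsq_le_sumsq Y
          rw [hCdef]
          have h5 : (0:ℝ) ≤ n*Chat := (mul_pos hn0 hChat).le
          have h6 : (3*(n:ℝ)*Chat) * (‖Y‖^2) ≤ (3*(n:ℝ)*Chat) * (W x₀) :=
            mul_le_mul_of_nonneg_left hWx0 (by positivity)
          have h7 : 0 ≤ ((n:ℝ)*Chat) * ((‖Y‖ - 1)^2) := mul_nonneg h5 (sq_nonneg _)
          nlinarith [h4, h6, h7]
        -- the time derivative
        set V : Fin n → ℝ := derivWithin (fun s => y s x₀) (Icc (0:ℝ) T) t₀ with hVdef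
        have hYt : HasDerivWithinAt (fun s => y s x₀) V (Icc (0:ℝ) T) t₀ :=
          (hy3 x₀ t₀ ht₀).hasDerivWithinAt
        have hVpde : V = ν • lap (y t₀) x₀ - dirDeriv (y t₀) x₀ uu + F t₀ x₀ Y := by
          rw [hVdef]
          exact hpde t₀ ht₀ x₀
        have hVi : ∀ i, V i = ν * lap (y t₀) x₀ i - fderiv ℝ (Yi i) x₀ uu + F t₀ x₀ Y i := by
          intro i
          rw [hVpde]
          simp only [Pi.add_apply, Pi.sub_apply, Pi.smul_apply, smul_eq_mul]
          rw [hddc i]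
        have hYti : ∀ i, HasDerivWithinAt (fun s => y s x₀ i) (V i) (Icc (0:ℝ) T) t₀ := by
          intro i
          exact (ContinuousLinearMap.proj (R := ℝ)
            (φ := fun _ : Fin n => ℝ) i).hasFDerivAt.comp_hasDerivWithinAt t₀ hYt
        have hWt : HasDerivWithinAt (fun s => ∑ i, (y s x₀ i)^2)
            (∑ i, 2 * Yi i x₀ * V i) (Icc (0:ℝ) T) t₀ := by
          have h1 : ∀ i, HasDerivWithinAt (fun s => (y s x₀ i)^2)
              (2 * Yi i x₀ * V i) (Icc (0:ℝ) T) t₀ := by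
            intro i
            have h2 : HasDerivWithinAt (fun s => y s x₀ i * y s x₀ i)
                (V i * Yi i x₀ + Yi i x₀ * V i) (Icc (0:ℝ) T) t₀ := (hYti i).mul (hYti i)
            have hfeq : (fun s => (y s x₀ i)^2) = (fun s => y s x₀ i * y s x₀ i) := by
              funext s; ring
            rw [hfeq]
            have hveq : (2:ℝ) * Yi i x₀ * V i = V i * Yi i x₀ + Yi i x₀ * V i := by ring
            rw [hveq]
            exact h2
          exact HasDerivWithinAt.fun_sum (fun i _ => h1 i)
        have hexp1 : HasDerivAt (fun s => Real.exp (-(C*s))) (Real.exp (-(C*t₀)) * (-C)) t₀ := by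
          have h1 : HasDerivAt (fun s : ℝ => -(C*s)) (-C) t₀ := by
            simpa using ((hasDerivAt_id t₀).const_mul C).fun_neg
          exact h1.exp
        have hexp2 : HasDerivAt (fun s => Real.exp (lam*s)) (Real.exp (lam*t₀) * lam) t₀ := by
          have h1 : HasDerivAt (fun s : ℝ => lam*s) lam t₀ := by
            simpa using (hasDerivAt_id t₀).const_mul lam
          exact h1.exp
        obtain ⟨D, hDdef⟩ : ∃ D : ℝ,
            D = (aa * (-C)) * (1 + W x₀) + aa * (∑ i, 2 * Yi i x₀ * V i)
              - bb * (lam * (1 + Q x₀)) := ⟨_, rfl⟩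
        have hfD : HasDerivWithinAt (fun s => ψ (s, x₀)) D (Icc (0:ℝ) T) t₀ := by
          have h1 := hexp1.hasDerivWithinAt.mul (hWt.const_add 1)
          have h2 : HasDerivWithinAt (fun s => ε * (Real.exp (lam*s) * (1 + Q x₀)))
              (ε * ((Real.exp (lam*t₀) * lam) * (1 + Q x₀))) (Icc (0:ℝ) T) t₀ :=
            ((hexp2.mul_const (1 + Q x₀)).const_mul ε).hasDerivWithinAt
          have h3 := h1.sub h2
          have h4 : (Real.exp (-(C*t₀)) * (-C)) * (1 + ∑ i, (y t₀ x₀ i)^2)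
              + Real.exp (-(C*t₀)) * (∑ i, 2 * Yi i x₀ * V i)
              - ε * ((Real.exp (lam*t₀) * lam) * (1 + Q x₀)) = D := by
            rw [hDdef, haadef, hbbdef]
            have hWx : W x₀ = ∑ i, (y t₀ x₀ i)^2 := rfl
            rw [hWx]
            ring
          rw [← h4]
          exact h3
        have hD0 : 0 ≤ D :=
          left_deriv_nonneg h0 ht₀.2 hfD (fun s hs => hp₀max (hKmem s hs x₀ hx₀R))
        -- splitting the sum using the PDE
        have hsum_split : ∑ i, 2 * Yi i x₀ * V i
            = ν * (∑ i, 2 * Yi i x₀ * lap (y t₀) x₀ i)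
              - (∑ i, 2 * Yi i x₀ * fderiv ℝ (Yi i) x₀ uu)
              + (∑ i, 2 * Yi i x₀ * F t₀ x₀ Y i) := by
          calc ∑ i, 2 * Yi i x₀ * V i
              = ∑ i, (ν * (2 * Yi i x₀ * lap (y t₀) x₀ i)
                - 2 * Yi i x₀ * fderiv ℝ (Yi i) x₀ uu + 2 * Yi i x₀ * F t₀ x₀ Y i) := by
                apply Finset.sum_congr rfl
                intro i _
                rw [hVi i]
                ring
            _ = _ := by
                rw [Finset.sum_add_distrib, Finset.sum_sub_distrib, ← Finset.mul_sum]
        have hE1 : aa * (∑ i, 2 * Yi i x₀ * V i)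
            ≤ ν * (2*n*bb) + bb * (n*U*(1 + Q x₀)) + aa * (C * (1 + W x₀)) := by
          rw [hsum_split]
          have hA1 : ν * (aa * (∑ i, 2 * Yi i x₀ * lap (y t₀) x₀ i)) ≤ ν * (2*n*bb) :=
            mul_le_mul_of_nonneg_left hlapbd hν.le
          have hA3 : -(bb * (∑ j, 2 * x₀ j * uu j)) ≤ bb * (U * (n + Q x₀)) := by
            have h2 := mul_le_mul_of_nonneg_left hDQb hbb0.le
            have h3 : -(∑ j, 2 * x₀ j * uu j) ≤ |∑ j, 2 * x₀ j * uu j| := neg_le_abs _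
            nlinarith [hbb0.le]
          have hA4 : aa * (∑ i, 2 * Yi i x₀ * F t₀ x₀ Y i) ≤ aa * (C * (1 + W x₀)) :=
            mul_le_mul_of_nonneg_left hFsum haa0.le
          have hA5 : bb * (U * (n + Q x₀)) ≤ bb * (n*U*(1 + Q x₀)) := by
            apply mul_le_mul_of_nonneg_left _ hbb0.le
            have h1 : (1:ℝ) ≤ n := by exact_mod_cast hn
            nlinarith [hQnn x₀, hU0,
              mul_nonneg (mul_nonneg (sub_nonneg.2 h1) hU0) (hQnn x₀)]
          have e2 : aa * (ν * (∑ i, 2 * Yi i x₀ * lap (y t₀) x₀ i)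
              - (∑ i, 2 * Yi i x₀ * fderiv ℝ (Yi i) x₀ uu)
              + (∑ i, 2 * Yi i x₀ * F t₀ x₀ Y i))
              = ν * (aa * (∑ i, 2 * Yi i x₀ * lap (y t₀) x₀ i))
                - aa * (∑ i, 2 * Yi i x₀ * fderiv ℝ (Yi i) x₀ uu)
                + aa * (∑ i, 2 * Yi i x₀ * F t₀ x₀ Y i) := by ring
          rw [e2, hgradu]
          linarith
        -- conclusion
        have hDle : D ≤ ν * (2*n*bb) + bb * (n*U*(1 + Q x₀)) - bb * (lam * (1 + Q x₀)) := by
          rw [hDdef]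
          have e3 : (aa * (-C)) * (1 + W x₀) + aa * (C * (1 + W x₀)) = 0 := by ring
          linarith
        have hneg : ν * (2*n*bb) + bb * (n*U*(1 + Q x₀)) - bb * (lam * (1 + Q x₀)) < 0 := by
          rw [hlamdef]
          have h1 : (0:ℝ) ≤ Q x₀ := hQnn x₀
          nlinarith [hbb0, hν, hn0, hU0,
            mul_nonneg hbb0.le (mul_nonneg (mul_nonneg hn0.le hν.le) h1),
            mul_nonneg hbb0.le h1,
            mul_nonneg (mul_nonneg hbb0.le (mul_nonneg hn0.le hU0)) h1]
        linarith
    -- conclude for the given point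
    by_cases hzR : ‖z₁‖ ≤ R
    · have h1 : ψ (s₁, z₁) ≤ ψ (t₀, x₀) := hp₀max (hKmem s₁ hs₁ z₁ hzR)
      have h2 : ψ (s₁, z₁) = Real.exp (-(C*s₁)) * (1 + ∑ i, (y s₁ z₁ i)^2)
          - ε * (Real.exp (lam*s₁) * (1 + Q z₁)) := rfl
      rw [h2] at h1
      exact le_trans h1 hmaxle
    · push_neg at hzR
      have h1 := hψout s₁ hs₁ z₁ hzR.le
      have h2 : ψ (s₁, z₁) = Real.exp (-(C*s₁)) * (1 + ∑ i, (y s₁ z₁ i)^2)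
          - ε * (Real.exp (lam*s₁) * (1 + Q z₁)) := rfl
      rw [h2] at h1
      have hnn : (0:ℝ) ≤ 1 + n*M₁^2 := by positivity
      linarith
  -- let ε → 0
  have main : (1 : ℝ) + ∑ i, (y t x i)^2 ≤ Real.exp (C*t) * (1 + n*M₁^2) := by
    have hexppos : (0:ℝ) < Real.exp (C*t) := Real.exp_pos _
    have hQnn : (0:ℝ) ≤ ∑ j, (x j)^2 := Finset.sum_nonneg fun j _ => sq_nonneg _
    set KK : ℝ := Real.exp (C*t) * (Real.exp (lam*t) * (1 + ∑ j, (x j)^2)) with hKKdef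
    have hKK0 : 0 < KK := by positivity
    have h1 : ∀ ε' : ℝ, 0 < ε' →
        (1 : ℝ) + ∑ i, (y t x i)^2 ≤ Real.exp (C*t) * (1 + n*M₁^2) + ε' := by
      intro ε' hε'
      set ε : ℝ := min (1/2) (ε'/KK) with hεdef
      have hε0 : 0 < ε := lt_min (by norm_num) (by positivity)
      have hε1 : ε < 1 := lt_of_le_of_lt (min_le_left _ _) (by norm_num)
      have hkey := key ε ⟨hε0, hε1⟩ t ht x
      have h2 : Real.exp (-(C*t)) * Real.exp (C*t) = 1 := by
        rw [← Real.exp_add]; norm_num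
      have h3 : ε * KK ≤ ε' := by
        calc ε * KK ≤ (ε'/KK) * KK := by
              apply mul_le_mul_of_nonneg_right (min_le_right _ _) (le_of_lt hKK0)
          _ = ε' := div_mul_cancel₀ _ (ne_of_gt hKK0)
      have h4 := mul_le_mul_of_nonneg_left hkey hexppos.le
      have h2' : Real.exp (C*t) * Real.exp (-(C*t)) = 1 := by
        rw [← Real.exp_add]; norm_num
      have h5 : Real.exp (C*t) * (Real.exp (-(C*t)) * (1 + ∑ i, (y t x i)^2)
          - ε * (Real.exp (lam*t) * (1 + ∑ j, (x j)^2)))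
          = (1 + ∑ i, (y t x i)^2) - ε * KK := by
        calc Real.exp (C*t) * (Real.exp (-(C*t)) * (1 + ∑ i, (y t x i)^2)
            - ε * (Real.exp (lam*t) * (1 + ∑ j, (x j)^2)))
            = (Real.exp (C*t) * Real.exp (-(C*t))) * (1 + ∑ i, (y t x i)^2) - ε * KK := by
              rw [hKKdef]; ring
          _ = (1 + ∑ i, (y t x i)^2) - ε * KK := by rw [h2']; ring
      rw [h5] at h4
      linarith
    by_contra hcon
    push_neg at hcon
    have := h1 ((1 + ∑ i, (y t x i)^2 - Real.exp (C*t) * (1 + n*M₁^2))/2) (by linarith)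
    linarith
  -- conclude
  have hle : ‖y t x‖^2 ≤ (1 + n * M₁^2) * Real.exp (C * T) := by
    have h1 : ‖y t x‖^2 ≤ ∑ i, (y t x i)^2 := normsq_le_sumsq _
    have h2 : Real.exp (C*t) ≤ Real.exp (C*T) :=
      Real.exp_le_exp.2 (mul_le_mul_of_nonneg_left ht.2 hC0.le)
    have h3 : (0:ℝ) ≤ 1 + n*M₁^2 := by positivity
    nlinarith
  rw [show (1 + n * M₁^2) * Real.exp (C * T)
      = ((1 + n * M₁^2) * Real.exp (C * T)) from rfl] at hle
  exact (Real.le_sqrt (norm_nonneg _) (by positivity)).2 hle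
end

section
/- Let η̄ : [0,T]×ℝⁿ → ℝⁿ, F̄ : [0,T]×ℝⁿ×ℝⁿ → ℝⁿ and h : ℝⁿ → ℝⁿ be continuous and satisfy, for some K > 0 and all arguments, |η̄(t,x)−η̄(t,x')| ≤ K|x−x'|, |h(x)−h(x')| ≤ K|x−x'|, and |F̄(t,x,y)−F̄(t,x',y')| ≤ K(|x−x'|+|y−y'|). Then there exists a constant γ_K > 0, depending only on K, such that for every τ ∈ [0,T] with T−τ ≤ γ_K and every x ∈ ℝⁿ, there exists a unique pair of continuous functions X, Y : [τ,T] → ℝⁿ satisfying the forward–backward system X_t = x − ∫_τ^t (η̄(s,X_s) + Y_s) ds and Y_t = h(X_T) + ∫_t^T F̄(s,X_s,Y_s) ds for all t ∈ [τ,T]. -/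
open Set MeasureTheory intervalIntegral

/-- The deterministic, inviscid forward–backward system on `[τ,T]` with data
`(η̄, F̄, h)` and initial point `x`. -/
def FBSol {n : ℕ} (T τ : ℝ) (ηb : ℝ → (Fin n → ℝ) → Fin n → ℝ)
    (Fb : ℝ → (Fin n → ℝ) → (Fin n → ℝ) → Fin n → ℝ)
    (h : (Fin n → ℝ) → Fin n → ℝ) (x : Fin n → ℝ)
    (X Y : ℝ → Fin n → ℝ) : Prop :=
  ContinuousOn X (Icc τ T) ∧ ContinuousOn Y (Icc τ T) ∧
  (∀ t ∈ Icc τ T, X t = x - ∫ s in τ..t, (ηb s (X s) + Y s)) ∧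
  (∀ t ∈ Icc τ T, Y t = h (X T) + ∫ s in t..T, Fb s (X s) (Y s))

theorem fb_aux {n : ℕ} (K T τ : ℝ) (hK : 0 < K) (hτT : τ ≤ T)
    (ηc : ℝ → (Fin n → ℝ) → Fin n → ℝ)
    (Fc : ℝ → (Fin n → ℝ) → (Fin n → ℝ) → Fin n → ℝ)
    (h : (Fin n → ℝ) → Fin n → ℝ)
    (hηc : Continuous fun p : ℝ × (Fin n → ℝ) => ηc p.1 p.2)
    (hFc : Continuous fun p : ℝ × (Fin n → ℝ) × (Fin n → ℝ) => Fc p.1 p.2.1 p.2.2)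
    (hh : Continuous h)
    (lipη : ∀ t x x', ‖ηc t x - ηc t x'‖ ≤ K * ‖x - x'‖)
    (liph : ∀ x x', ‖h x - h x'‖ ≤ K * ‖x - x'‖)
    (lipF : ∀ t x x' v v', ‖Fc t x v - Fc t x' v'‖ ≤ K * (‖x - x'‖ + ‖v - v'‖))
    (hδ1 : T - τ ≤ 1) (hδ2 : 14 * (K + 1) ^ 2 * (T - τ) ≤ 1) (x : Fin n → ℝ) :
    ∃ X Y : ℝ → Fin n → ℝ, FBSol T τ ηc Fc h x X Y ∧
      ∀ X' Y' : ℝ → Fin n → ℝ, FBSol T τ ηc Fc h x X' Y' →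
        ∀ t ∈ Icc τ T, X' t = X t ∧ Y' t = Y t := by
  have hδ0 : (0:ℝ) ≤ T - τ := sub_nonneg.2 hτT
  have hK1 : (0:ℝ) < K + 1 := by linarith
  haveI : Nonempty (Icc τ T) := ⟨⟨τ, le_refl τ, hτT⟩⟩
  set P : ℝ → Icc τ T := projIcc τ T hτT with hPdef
  have hPcont : Continuous P := continuous_projIcc
  have hPs : ∀ s ∈ Icc τ T, (P s : ℝ) = s := fun s hs => by
    rw [hPdef, projIcc_of_mem hτT hs]
  have hTmem : T ∈ Icc τ T := right_mem_Icc.2 hτT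
  -- continuity of components
  have hXc : ∀ Z : C(Icc τ T, (Fin n → ℝ) × (Fin n → ℝ)),
      Continuous fun s : ℝ => (Z (P s)).1 := fun Z =>
    continuous_fst.comp (Z.continuous.comp hPcont)
  have hYc : ∀ Z : C(Icc τ T, (Fin n → ℝ) × (Fin n → ℝ)),
      Continuous fun s : ℝ => (Z (P s)).2 := fun Z =>
    continuous_snd.comp (Z.continuous.comp hPcont)
  have hgc : ∀ Z : C(Icc τ T, (Fin n → ℝ) × (Fin n → ℝ)),
      Continuous fun s : ℝ => ηc s ((Z (P s)).1) + (Z (P s)).2 := fun Z =>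
    (hηc.comp (continuous_id.prodMk (hXc Z))).add (hYc Z)
  have hfc : ∀ Z : C(Icc τ T, (Fin n → ℝ) × (Fin n → ℝ)),
      Continuous fun s : ℝ => Fc s ((Z (P s)).1) ((Z (P s)).2) := fun Z =>
    hFc.comp (continuous_id.prodMk ((hXc Z).prodMk (hYc Z)))
  -- the map Φ
  have hcontΦ : ∀ Z : C(Icc τ T, (Fin n → ℝ) × (Fin n → ℝ)),
      Continuous (fun t : Icc τ T =>
        ((x - ∫ s in τ..(t:ℝ), (ηc s ((Z (P s)).1) + (Z (P s)).2),
          h ((Z (P T)).1) + ∫ s in (t:ℝ)..T, Fc s ((Z (P s)).1) ((Z (P s)).2)) :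
          (Fin n → ℝ) × (Fin n → ℝ))) := by
    intro Z
    apply Continuous.prodMk
    · exact continuous_const.sub
        ((intervalIntegral.continuous_primitive
          (fun a b => (hgc Z).intervalIntegrable a b) τ).comp continuous_subtype_val)
    · have h1 : Continuous fun r : ℝ =>
          ∫ s in r..T, Fc s ((Z (P s)).1) ((Z (P s)).2) := by
        have h2 := (intervalIntegral.continuous_primitive (μ := volume)
          (fun a b => (hfc Z).intervalIntegrable a b) T).neg
        refine h2.congr fun r => ?_
        simp only [Pi.neg_apply]
        rw [intervalIntegral.integral_symm T r]
      exact continuous_const.add (h1.comp continuous_subtype_val)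
  set Φ : C(Icc τ T, (Fin n → ℝ) × (Fin n → ℝ)) → C(Icc τ T, (Fin n → ℝ) × (Fin n → ℝ)) :=
    fun Z => ⟨_, hcontΦ Z⟩ with hΦdef
  have hΦ : ∀ Z (t : Icc τ T), Φ Z t =
      (x - ∫ s in τ..(t:ℝ), (ηc s ((Z (P s)).1) + (Z (P s)).2),
       h ((Z (P T)).1) + ∫ s in (t:ℝ)..T, Fc s ((Z (P s)).1) ((Z (P s)).2)) :=
    fun Z t => rfl
  -- pointwise distance bound between components
  have hA0 : ∀ (Z W : C(Icc τ T, (Fin n → ℝ) × (Fin n → ℝ))) (u : Icc τ T),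
      ‖(Z u).1 - (W u).1‖ ≤ dist Z W := by
    intro Z W u
    rw [← dist_eq_norm]
    refine le_trans ?_ (ContinuousMap.dist_apply_le_dist u)
    rw [Prod.dist_eq]
    exact le_max_left _ _
  have hB0 : ∀ (Z W : C(Icc τ T, (Fin n → ℝ) × (Fin n → ℝ))) (u : Icc τ T),
      ‖(Z u).2 - (W u).2‖ ≤ dist Z W := by
    intro Z W u
    rw [← dist_eq_norm]
    refine le_trans ?_ (ContinuousMap.dist_apply_le_dist u)
    rw [Prod.dist_eq]
    exact le_max_right _ _
  -- key estimate A : first component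
  have keyA : ∀ (Z W : C(Icc τ T, (Fin n → ℝ) × (Fin n → ℝ))) (D : ℝ), dist Z W ≤ D →
      ∀ t : Icc τ T, dist ((Φ Z) t).1 ((Φ W) t).1 ≤ (K + 1) * D * (T - τ) := by
    intro Z W D hD t
    have hD0 : 0 ≤ D := le_trans dist_nonneg hD
    rw [hΦ, hΦ]
    simp only
    rw [dist_sub_left, dist_eq_norm, ← intervalIntegral.integral_sub
      ((hgc Z).intervalIntegrable _ _) ((hgc W).intervalIntegrable _ _)]
    have hb : ∀ s ∈ Set.uIoc τ (t:ℝ),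
        ‖(ηc s ((Z (P s)).1) + (Z (P s)).2) - (ηc s ((W (P s)).1) + (W (P s)).2)‖
          ≤ (K + 1) * D := by
      intro s _
      have h1 := lipη s ((Z (P s)).1) ((W (P s)).1)
      have h2 := hA0 Z W (P s)
      have h3 := hB0 Z W (P s)
      have heq : (ηc s ((Z (P s)).1) + (Z (P s)).2) - (ηc s ((W (P s)).1) + (W (P s)).2)
          = (ηc s ((Z (P s)).1) - ηc s ((W (P s)).1)) + ((Z (P s)).2 - (W (P s)).2) := by
        abel
      rw [heq]
      calc ‖_ + _‖ ≤ ‖ηc s ((Z (P s)).1) - ηc s ((W (P s)).1)‖ + ‖(Z (P s)).2 - (W (P s)).2‖ :=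
            norm_add_le _ _
        _ ≤ K * D + D := by
            refine add_le_add (le_trans h1 ?_) (le_trans h3 hD)
            exact mul_le_mul_of_nonneg_left (le_trans h2 hD) hK.le
        _ = (K + 1) * D := by ring
    refine le_trans (intervalIntegral.norm_integral_le_of_norm_le_const hb) ?_
    have habs : |(t:ℝ) - τ| ≤ T - τ := by
      rw [abs_of_nonneg (sub_nonneg.2 t.2.1)]
      linarith [t.2.2]
    exact mul_le_mul_of_nonneg_left habs (by positivity)
  -- key estimate B : second component
  have keyB : ∀ (Z W : C(Icc τ T, (Fin n → ℝ) × (Fin n → ℝ))) (A D : ℝ),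
      (∀ u : Icc τ T, ‖(Z u).1 - (W u).1‖ ≤ A) → dist Z W ≤ D →
      ∀ t : Icc τ T, dist ((Φ Z) t).2 ((Φ W) t).2 ≤ K * A + 2 * K * D * (T - τ) := by
    intro Z W A D hA hD t
    have hD0 : 0 ≤ D := le_trans dist_nonneg hD
    have hA0' : 0 ≤ A := le_trans (norm_nonneg _) (hA (P T))
    rw [hΦ, hΦ]
    simp only
    refine le_trans (dist_add_add_le _ _ _ _) (add_le_add ?_ ?_)
    · rw [dist_eq_norm]
      exact le_trans (liph _ _) (mul_le_mul_of_nonneg_left (hA (P T)) hK.le)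
    · rw [dist_eq_norm, ← intervalIntegral.integral_sub
        ((hfc Z).intervalIntegrable _ _) ((hfc W).intervalIntegrable _ _)]
      have hb : ∀ s ∈ Set.uIoc (t:ℝ) T,
          ‖Fc s ((Z (P s)).1) ((Z (P s)).2) - Fc s ((W (P s)).1) ((W (P s)).2)‖
            ≤ 2 * K * D := by
        intro s _
        refine le_trans (lipF s _ _ _ _) ?_
        have h2 := le_trans (hA0 Z W (P s)) hD
        have h3 := le_trans (hB0 Z W (P s)) hD
        nlinarith
      refine le_trans (intervalIntegral.norm_integral_le_of_norm_le_const hb) ?_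
      have habs : |T - (t:ℝ)| ≤ T - τ := by
        rw [abs_of_nonneg (sub_nonneg.2 t.2.2)]
        linarith [t.2.1]
      exact mul_le_mul_of_nonneg_left habs (by positivity)
  -- Lipschitz bound for Φ
  have LipΦ : ∀ Z W, dist (Φ Z) (Φ W) ≤ (3 * (K + 1)) * dist Z W := by
    intro Z W
    have hd0 : (0:ℝ) ≤ dist Z W := dist_nonneg
    rw [ContinuousMap.dist_le (by positivity)]
    intro t
    rw [Prod.dist_eq]
    refine max_le ?_ ?_
    · refine le_trans (keyA Z W (dist Z W) le_rfl t) ?_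
      nlinarith [mul_nonneg (mul_nonneg hK1.le hd0) (show (0:ℝ) ≤ 1 - (T - τ) by linarith),
        mul_nonneg hK1.le hd0]
    · refine le_trans (keyB Z W (dist Z W) (dist Z W) (fun u => hA0 Z W u) le_rfl t) ?_
      nlinarith [mul_nonneg (mul_nonneg hK.le hd0) (show (0:ℝ) ≤ 1 - (T - τ) by linarith),
        mul_nonneg hK.le hd0, hd0]
  -- contraction bound for Φ ∘ Φ
  have hcontr : ∀ Z W, dist (Φ (Φ Z)) (Φ (Φ W)) ≤ (1/2) * dist Z W := by
    intro Z W
    have hd0 : (0:ℝ) ≤ dist Z W := dist_nonneg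
    have hd' : dist (Φ Z) (Φ W) ≤ 3 * (K + 1) * dist Z W := LipΦ Z W
    rw [ContinuousMap.dist_le (by positivity)]
    intro t
    rw [Prod.dist_eq]
    have h14 := mul_le_mul_of_nonneg_right hδ2 hd0
    refine max_le ?_ ?_
    · refine le_trans (keyA (Φ Z) (Φ W) _ hd' t) ?_
      nlinarith [h14, mul_nonneg (mul_nonneg (sq_nonneg (K+1)) hδ0) hd0,
        mul_nonneg (mul_nonneg hK1.le hδ0) hd0, mul_nonneg hδ0 hd0]
    · have hAest : ∀ u : Icc τ T, ‖((Φ Z) u).1 - ((Φ W) u).1‖ ≤ (K + 1) * dist Z W * (T - τ) := by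
        intro u
        rw [← dist_eq_norm]
        exact keyA Z W (dist Z W) le_rfl u
      refine le_trans (keyB (Φ Z) (Φ W) _ _ hAest hd' t) ?_
      nlinarith [h14, mul_nonneg (mul_nonneg hK.le hδ0) hd0, mul_nonneg hδ0 hd0,
        mul_nonneg (mul_nonneg (sq_nonneg (K+1)) hδ0) hd0]
  have hcont2 : ContractingWith (1/2 : NNReal) (Φ^[2]) := by
    constructor
    · rw [← NNReal.coe_lt_coe]
      norm_num
    · apply LipschitzWith.of_dist_le_mul
      intro Z W
      have hit : Φ^[2] Z = Φ (Φ Z) := by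
        simp [Function.iterate_succ_apply']
      have hit' : Φ^[2] W = Φ (Φ W) := by
        simp [Function.iterate_succ_apply']
      rw [hit, hit']
      have : ((1/2 : NNReal) : ℝ) = 1/2 := by norm_num
      rw [this]
      exact hcontr Z W
  set Zs := ContractingWith.fixedPoint (Φ^[2]) hcont2 with hZsdef
  have hfix : Φ Zs = Zs := hcont2.isFixedPt_fixedPoint_iterate
  have huniq : ∀ W, Φ W = W → W = Zs := fun W hW =>
    hcont2.fixedPoint_unique (Function.IsFixedPt.iterate hW 2)
  refine ⟨fun s => (Zs (P s)).1, fun s => (Zs (P s)).2, ⟨(hXc Zs).continuousOn,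
      (hYc Zs).continuousOn, ?_, ?_⟩, ?_⟩
  · intro t ht
    have hPt : P t = ⟨t, ht⟩ := projIcc_of_mem hτT ht
    have h1 : Zs ⟨t, ht⟩ = Φ Zs ⟨t, ht⟩ := by rw [hfix]
    show (Zs (P t)).1 = x - ∫ s in τ..t, (ηc s ((Zs (P s)).1) + (Zs (P s)).2)
    rw [hPt, h1, hΦ]
  · intro t ht
    have hPt : P t = ⟨t, ht⟩ := projIcc_of_mem hτT ht
    have h1 : Zs ⟨t, ht⟩ = Φ Zs ⟨t, ht⟩ := by rw [hfix]
    show (Zs (P t)).2 = h ((Zs (P T)).1) + ∫ s in t..T, Fc s ((Zs (P s)).1) ((Zs (P s)).2)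
    rw [hPt, h1, hΦ]
  · rintro X' Y' ⟨hXc', hYc', he1, he2⟩ t ht
    set Z' : C(Icc τ T, (Fin n → ℝ) × (Fin n → ℝ)) :=
      ⟨fun u => (X' u, Y' u), (hXc'.restrict).prodMk (hYc'.restrict)⟩ with hZ'def
    have hZ'eval : ∀ u : Icc τ T, Z' u = (X' u, Y' u) := fun u => rfl
    have hZ'fix : Φ Z' = Z' := by
      apply ContinuousMap.ext
      intro u
      rw [hΦ, hZ'eval]
      have husub : Icc τ (u:ℝ) ⊆ Icc τ T := Icc_subset_Icc le_rfl u.2.2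
      have husub' : Icc (u:ℝ) T ⊆ Icc τ T := Icc_subset_Icc u.2.1 le_rfl
      have hPT : ((P T : Icc τ T) : ℝ) = T := hPs T hTmem
      apply Prod.ext
      · simp only
        have hint : ∫ s in τ..(u:ℝ), (ηc s ((Z' (P s)).1) + (Z' (P s)).2)
            = ∫ s in τ..(u:ℝ), (ηc s (X' s) + Y' s) := by
          apply intervalIntegral.integral_congr
          intro s hs
          rw [Set.uIcc_of_le u.2.1] at hs
          have hsI : s ∈ Icc τ T := husub hs
          have hcoe : ((P s : Icc τ T) : ℝ) = s := hPs s hsI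
          simp only [hZ'eval, hcoe]
        rw [hint]
        exact (he1 (u:ℝ) u.2).symm
      · simp only
        have hint : ∫ s in (u:ℝ)..T, Fc s ((Z' (P s)).1) ((Z' (P s)).2)
            = ∫ s in (u:ℝ)..T, Fc s (X' s) (Y' s) := by
          apply intervalIntegral.integral_congr
          intro s hs
          rw [Set.uIcc_of_le u.2.2] at hs
          have hsI : s ∈ Icc τ T := husub' hs
          have hcoe : ((P s : Icc τ T) : ℝ) = s := hPs s hsI
          simp only [hZ'eval, hcoe]
        rw [hint, hZ'eval, hPT]
        exact (he2 (u:ℝ) u.2).symm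
    have hZZ : Z' = Zs := huniq Z' hZ'fix
    have hPt : P t = ⟨t, ht⟩ := projIcc_of_mem hτT ht
    have hcoe : ((P t : Icc τ T) : ℝ) = t := hPs t ht
    constructor
    · show X' t = (Zs (P t)).1
      rw [← hZZ]
      show X' t = X' ↑(P t)
      rw [hcoe]
    · show Y' t = (Zs (P t)).2
      rw [← hZZ]
      show Y' t = Y' ↑(P t)
      rw [hcoe]
theorem FBSol_imp {n : ℕ} {T τ : ℝ}
    {η1 η2 : ℝ → (Fin n → ℝ) → Fin n → ℝ}
    {F1 F2 : ℝ → (Fin n → ℝ) → (Fin n → ℝ) → Fin n → ℝ}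
    {h : (Fin n → ℝ) → Fin n → ℝ} {x : Fin n → ℝ} {X Y : ℝ → Fin n → ℝ}
    (hτ0 : 0 ≤ τ) (hτT : τ ≤ T)
    (hη : ∀ s ∈ Icc (0:ℝ) T, ∀ y, η1 s y = η2 s y)
    (hF : ∀ s ∈ Icc (0:ℝ) T, ∀ y v, F1 s y v = F2 s y v) :
    FBSol T τ η1 F1 h x X Y → FBSol T τ η2 F2 h x X Y := by
  rintro ⟨c1, c2, e1, e2⟩
  refine ⟨c1, c2, fun t ht => ?_, fun t ht => ?_⟩
  · rw [e1 t ht]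
    congr 1
    apply intervalIntegral.integral_congr
    intro s hs
    rw [Set.uIcc_of_le ht.1] at hs
    have hs' : s ∈ Icc (0:ℝ) T := ⟨le_trans hτ0 hs.1, le_trans hs.2 ht.2⟩
    simp only [hη s hs']
  · rw [e2 t ht]
    congr 1
    apply intervalIntegral.integral_congr
    intro s hs
    rw [Set.uIcc_of_le ht.2] at hs
    have hs' : s ∈ Icc (0:ℝ) T := ⟨le_trans (le_trans hτ0 ht.1) hs.1, hs.2⟩
    simp only [hF s hs']


/-- Short-time existence and uniqueness for the deterministic forward–backward
system, with interval length depending only on the Lipschitz constant `K`. -/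
theorem stmt_7 {n : ℕ} (hn : 1 ≤ n) (K : ℝ) (hK : 0 < K) :
    ∃ γ : ℝ, 0 < γ ∧ ∀ T : ℝ, 0 < T →
    ∀ (ηb : ℝ → (Fin n → ℝ) → Fin n → ℝ)
      (Fb : ℝ → (Fin n → ℝ) → (Fin n → ℝ) → Fin n → ℝ)
      (h : (Fin n → ℝ) → Fin n → ℝ),
    ContinuousOn (fun p : ℝ × (Fin n → ℝ) => ηb p.1 p.2)
      (Icc (0:ℝ) T ×ˢ (univ : Set (Fin n → ℝ))) →
    ContinuousOn (fun p : ℝ × (Fin n → ℝ) × (Fin n → ℝ) => Fb p.1 p.2.1 p.2.2)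
      (Icc (0:ℝ) T ×ˢ (univ : Set ((Fin n → ℝ) × (Fin n → ℝ)))) →
    Continuous h →
    (∀ t ∈ Icc (0:ℝ) T, ∀ x x', ‖ηb t x - ηb t x'‖ ≤ K * ‖x - x'‖) →
    (∀ x x', ‖h x - h x'‖ ≤ K * ‖x - x'‖) →
    (∀ t ∈ Icc (0:ℝ) T, ∀ x x' v v',
      ‖Fb t x v - Fb t x' v'‖ ≤ K * (‖x - x'‖ + ‖v - v'‖)) →
    ∀ τ ∈ Icc (0:ℝ) T, T - τ ≤ γ → ∀ x : Fin n → ℝ,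
    ∃ X Y : ℝ → Fin n → ℝ, FBSol T τ ηb Fb h x X Y ∧
      ∀ X' Y' : ℝ → Fin n → ℝ, FBSol T τ ηb Fb h x X' Y' →
        ∀ t ∈ Icc τ T, X' t = X t ∧ Y' t = Y t := by
  have hKpos : (0:ℝ) < 14 * (K + 1) ^ 2 := by nlinarith
  refine ⟨min 1 ((14 * (K + 1) ^ 2)⁻¹), lt_min one_pos (inv_pos.2 hKpos), ?_⟩
  intro T hT ηb Fb h hηb hFb hh lipη liph lipF τ hτ hγ x
  have hτ0 : (0:ℝ) ≤ τ := hτ.1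
  have hτT : τ ≤ T := hτ.2
  have hδ1 : T - τ ≤ 1 := le_trans hγ (min_le_left _ _)
  have hδ2 : 14 * (K + 1) ^ 2 * (T - τ) ≤ 1 := by
    have h1 : T - τ ≤ (14 * (K + 1) ^ 2)⁻¹ := le_trans hγ (min_le_right _ _)
    calc 14 * (K + 1) ^ 2 * (T - τ) ≤ 14 * (K + 1) ^ 2 * (14 * (K + 1) ^ 2)⁻¹ :=
          mul_le_mul_of_nonneg_left h1 hKpos.le
      _ = 1 := mul_inv_cancel₀ hKpos.ne'
  set P0 : ℝ → Icc (0:ℝ) T := projIcc 0 T hT.le with hP0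
  have hP0mem : ∀ s : ℝ, ((P0 s : Icc (0:ℝ) T) : ℝ) ∈ Icc (0:ℝ) T := fun s => (P0 s).2
  set ηc : ℝ → (Fin n → ℝ) → Fin n → ℝ := fun s y => ηb (P0 s) y with hηcdef
  set Fc : ℝ → (Fin n → ℝ) → (Fin n → ℝ) → Fin n → ℝ := fun s y v => Fb (P0 s) y v with hFcdef
  have hsub : Continuous fun p : ℝ × (Fin n → ℝ) =>
      ((⟨(((P0 p.1 : Icc (0:ℝ) T) : ℝ), p.2), ⟨(P0 p.1).2, mem_univ _⟩⟩ :
        (Icc (0:ℝ) T ×ˢ (univ : Set (Fin n → ℝ)) : Set (ℝ × (Fin n → ℝ))))) := by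
    apply Continuous.subtype_mk
    exact (continuous_subtype_val.comp (continuous_projIcc.comp continuous_fst)).prodMk
      continuous_snd
  have hηc : Continuous fun p : ℝ × (Fin n → ℝ) => ηc p.1 p.2 := hηb.restrict.comp hsub
  have hsub2 : Continuous fun p : ℝ × (Fin n → ℝ) × (Fin n → ℝ) =>
      ((⟨(((P0 p.1 : Icc (0:ℝ) T) : ℝ), p.2), ⟨(P0 p.1).2, mem_univ _⟩⟩ :
        (Icc (0:ℝ) T ×ˢ (univ : Set ((Fin n → ℝ) × (Fin n → ℝ))) :
          Set (ℝ × (Fin n → ℝ) × (Fin n → ℝ))))) := by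
    apply Continuous.subtype_mk
    exact (continuous_subtype_val.comp (continuous_projIcc.comp continuous_fst)).prodMk
      continuous_snd
  have hFc : Continuous fun p : ℝ × (Fin n → ℝ) × (Fin n → ℝ) => Fc p.1 p.2.1 p.2.2 :=
    hFb.restrict.comp hsub2
  have lipη' : ∀ t x x', ‖ηc t x - ηc t x'‖ ≤ K * ‖x - x'‖ := fun t =>
    lipη (P0 t) (P0 t).2
  have lipF' : ∀ t x x' v v', ‖Fc t x v - Fc t x' v'‖ ≤ K * (‖x - x'‖ + ‖v - v'‖) := fun t =>
    lipF (P0 t) (P0 t).2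
  have hηeq : ∀ s ∈ Icc (0:ℝ) T, ∀ y, ηc s y = ηb s y := by
    intro s hs y
    rw [hηcdef]
    simp only
    rw [hP0, projIcc_of_mem hT.le hs]
  have hFeq : ∀ s ∈ Icc (0:ℝ) T, ∀ y v, Fc s y v = Fb s y v := by
    intro s hs y v
    rw [hFcdef]
    simp only
    rw [hP0, projIcc_of_mem hT.le hs]
  obtain ⟨X, Y, hsol, huni⟩ := fb_aux K T τ hK hτT ηc Fc h hηc hFc hh lipη' liph lipF'
    hδ1 hδ2 x
  refine ⟨X, Y, FBSol_imp hτ0 hτT hηeq hFeq hsol, fun X' Y' hs' t ht => ?_⟩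
  exact huni X' Y' (FBSol_imp hτ0 hτT (fun s hs y => (hηeq s hs y).symm)
    (fun s hs y v => (hFeq s hs y v).symm) hs') t ht
end

section
/- Let η̄ : [0,T]×ℝⁿ → ℝⁿ and F̄ : [0,T]×ℝⁿ×ℝⁿ → ℝⁿ be continuous, h : ℝⁿ → ℝⁿ, 0 ≤ τ < T and x ∈ ℝⁿ. Suppose ỹ : [τ,T]×ℝⁿ → ℝⁿ is continuously differentiable in (t,x) and satisfies ∂_t ỹ(t,x) = ((η̄(t,x)+ỹ(t,x)),∇)ỹ(t,x) − F̄(t,x,ỹ(t,x)) on [τ,T]×ℝⁿ with ỹ(T,·) = h. Let X̃ : [τ,T] → ℝⁿ be a continuous function with X̃_t = x − ∫_τ^t (η̄(s,X̃_s) + ỹ(s,X̃_s)) ds for all t ∈ [τ,T]. Then the pair (X̃, Y) with Y_t := ỹ(t, X̃_t) solves the forward–backward system: X̃_t = x − ∫_τ^t (η̄(s,X̃_s) + Y_s) ds and Y_t = h(X̃_T) + ∫_t^T F̄(s,X̃_s,Y_s) ds for all t ∈ [τ,T]. -/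
open Set MeasureTheory intervalIntegral

/-- Derivative of `s ↦ ∫_t^s g(r, X s) dr` at `s = t` within `Icc τ T`, for `g`
jointly continuous and `X` continuous. -/
lemma hasDerivWithinAt_intervalIntegral_comp {n : ℕ} {τ T : ℝ}
    (g : ℝ → (Fin n → ℝ) → Fin n → ℝ)
    (hg : ContinuousOn (fun p : ℝ × (Fin n → ℝ) => g p.1 p.2)
      (Icc τ T ×ˢ (univ : Set (Fin n → ℝ))))
    (X : ℝ → Fin n → ℝ) (hX : ContinuousOn X (Icc τ T))
    {t : ℝ} (ht : t ∈ Icc τ T) :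
    HasDerivWithinAt (fun s => ∫ r in t..s, g r (X s)) (g t (X t)) (Icc τ T) t := by
  rw [hasDerivWithinAt_iff_isLittleO]
  rw [Asymptotics.isLittleO_iff]
  intro c hc
  obtain ⟨δ, hδpos, hδ⟩ := Metric.continuousWithinAt_iff.1 (hg (t, X t) ⟨ht, mem_univ _⟩) c hc
  have e1 : ∀ᶠ s in nhdsWithin t (Icc τ T), dist s t < δ := by
    filter_upwards [nhdsWithin_le_nhds (Metric.ball_mem_nhds t hδpos)] with s hs
    exact hs
  have e2 : ∀ᶠ s in nhdsWithin t (Icc τ T), dist (X s) (X t) < δ := by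
    filter_upwards [(hX t ht) (Metric.ball_mem_nhds (X t) hδpos)] with s hs
    exact hs
  filter_upwards [e1, e2, self_mem_nhdsWithin] with s hs1 hs2 hs3
  have hst : |s - t| < δ := by rwa [Real.dist_eq] at hs1
  have hgXs : ContinuousOn (fun r => g r (X s)) (Icc τ T) :=
    hg.comp (continuousOn_id.prodMk continuousOn_const) (fun r hr => ⟨hr, mem_univ _⟩)
  have hint1 : IntervalIntegrable (fun r => g r (X s)) volume t s :=
    (hgXs.mono (uIcc_subset_Icc ht hs3)).intervalIntegrable
  have hbound : ∀ r ∈ Set.uIoc t s, ‖g r (X s) - g t (X t)‖ ≤ c := by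
    intro r hr
    have hr' : r ∈ Icc τ T := uIcc_subset_Icc ht hs3 (uIoc_subset_uIcc hr)
    have h1 : t ⊓ s < r := hr.1
    have h2 : r ≤ t ⊔ s := hr.2
    have hsup : t ⊔ s ≤ t + |s - t| :=
      sup_le (by linarith [abs_nonneg (s - t)]) (by linarith [le_abs_self (s - t)])
    have hinf : t - |s - t| ≤ t ⊓ s :=
      le_inf (by linarith [abs_nonneg (s - t)]) (by linarith [neg_abs_le (s - t)])
    have hrt : dist r t < δ := by
      rw [Real.dist_eq, abs_sub_lt_iff]
      constructor <;> linarith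
    have hmem : (r, X s) ∈ Icc τ T ×ˢ (univ : Set (Fin n → ℝ)) := ⟨hr', mem_univ _⟩
    have hd : dist ((r, X s) : ℝ × (Fin n → ℝ)) ((t, X t)) < δ := by
      rw [Prod.dist_eq]
      exact max_lt hrt hs2
    have := hδ hmem hd
    rw [dist_eq_norm] at this
    exact le_of_lt this
  calc ‖(∫ r in t..s, g r (X s)) - (∫ r in t..t, g r (X t)) - (s - t) • g t (X t)‖
      = ‖∫ r in t..s, (g r (X s) - g t (X t))‖ := by
        rw [intervalIntegral.integral_same, sub_zero,
          intervalIntegral.integral_sub hint1 intervalIntegrable_const,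
          intervalIntegral.integral_const]
    _ ≤ c * |s - t| := intervalIntegral.norm_integral_le_of_norm_le_const hbound
    _ = c * ‖s - t‖ := by rw [Real.norm_eq_abs]

/-- Verification: if `ỹ` solves the backward inviscid PDE and `X̃` solves the
associated forward characteristic equation, then `(X̃, ỹ(t,X̃_t))` solves the
forward–backward system. -/
theorem stmt_11 {n : ℕ} (hn : 1 ≤ n) (T : ℝ) (hT : 0 < T)
    (ηb : ℝ → (Fin n → ℝ) → Fin n → ℝ)
    (Fb : ℝ → (Fin n → ℝ) → (Fin n → ℝ) → Fin n → ℝ)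
    (h : (Fin n → ℝ) → Fin n → ℝ)
    (hηc : ContinuousOn (fun p : ℝ × (Fin n → ℝ) => ηb p.1 p.2)
      (Icc (0:ℝ) T ×ˢ (univ : Set (Fin n → ℝ))))
    (hFc : ContinuousOn (fun p : ℝ × (Fin n → ℝ) × (Fin n → ℝ) => Fb p.1 p.2.1 p.2.2)
      (Icc (0:ℝ) T ×ˢ (univ : Set ((Fin n → ℝ) × (Fin n → ℝ)))))
    (τ : ℝ) (hτ0 : 0 ≤ τ) (hτT : τ < T) (x : Fin n → ℝ)
    (ytil : ℝ → (Fin n → ℝ) → Fin n → ℝ)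
    -- `ỹ` is continuously differentiable in `(t,x)` on `[τ,T]×ℝⁿ`:
    (hyc : ContinuousOn (fun p : ℝ × (Fin n → ℝ) => ytil p.1 p.2)
      (Icc τ T ×ˢ (univ : Set (Fin n → ℝ))))
    (hyx : ∀ t ∈ Icc τ T, Differentiable ℝ (ytil t))
    (hyxc : ContinuousOn (fun p : ℝ × (Fin n → ℝ) => fderiv ℝ (ytil p.1) p.2)
      (Icc τ T ×ˢ (univ : Set (Fin n → ℝ))))
    (hytc : ContinuousOn (fun p : ℝ × (Fin n → ℝ) =>
        derivWithin (fun s => ytil s p.2) (Icc τ T) p.1)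
      (Icc τ T ×ˢ (univ : Set (Fin n → ℝ))))
    -- `ỹ` satisfies `∂_t ỹ = ((η̄+ỹ),∇)ỹ − F̄(t,x,ỹ)` on `[τ,T]×ℝⁿ`:
    (hpde : ∀ t ∈ Icc τ T, ∀ z : Fin n → ℝ,
      HasDerivWithinAt (fun s => ytil s z)
        (dirDeriv (ytil t) z (ηb t z + ytil t z) - Fb t z (ytil t z)) (Icc τ T) t)
    (hyT : ∀ z, ytil T z = h z)
    (Xt : ℝ → Fin n → ℝ)
    (hXc : ContinuousOn Xt (Icc τ T))
    (hXeq : ∀ t ∈ Icc τ T, Xt t = x - ∫ s in τ..t, (ηb s (Xt s) + ytil s (Xt s))) :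
    FBSol T τ ηb Fb h x Xt (fun t => ytil t (Xt t)) := by
  have hIccsub : Icc τ T ⊆ Icc (0:ℝ) T := Icc_subset_Icc hτ0 le_rfl
  set Y : ℝ → Fin n → ℝ := fun t => ytil t (Xt t) with hYdef
  set g : ℝ → (Fin n → ℝ) → Fin n → ℝ :=
    fun r z => derivWithin (fun s => ytil s z) (Icc τ T) r with hgdef
  set G : ℝ → Fin n → ℝ := fun s => ηb s (Xt s) + ytil s (Xt s) with hGdef
  have hud : UniqueDiffOn ℝ (Icc τ T) := uniqueDiffOn_Icc hτT
  -- continuity of Y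
  have hidX : ContinuousOn (fun t => ((t, Xt t) : ℝ × (Fin n → ℝ))) (Icc τ T) :=
    continuousOn_id.prodMk hXc
  have hYc : ContinuousOn Y (Icc τ T) :=
    hyc.comp hidX (fun t ht => ⟨ht, mem_univ _⟩)
  have hηX : ContinuousOn (fun s => ηb s (Xt s)) (Icc τ T) :=
    hηc.comp hidX (fun t ht => ⟨hIccsub ht, mem_univ _⟩)
  have hGc : ContinuousOn G (Icc τ T) := hηX.add hYc
  -- continuity of s ↦ Fb s (Xt s) (Y s)
  have hFbc : ContinuousOn (fun s => Fb s (Xt s) (Y s)) (Icc τ T) :=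
    hFc.comp (continuousOn_id.prodMk (hXc.prodMk hYc))
      (fun t ht => ⟨hIccsub ht, mem_univ _⟩)
  -- value of g
  have gval : ∀ t ∈ Icc τ T, ∀ z, g t z =
      dirDeriv (ytil t) z (ηb t z + ytil t z) - Fb t z (ytil t z) := by
    intro t ht z
    exact (hpde t ht z).derivWithin (hud t ht)
  -- continuity of g in r for fixed z
  have hgz : ∀ z, ContinuousOn (fun r => g r z) (Icc τ T) := fun z =>
    hytc.comp (continuousOn_id.prodMk continuousOn_const) (fun r hr => ⟨hr, mem_univ _⟩)
  have hyzc : ∀ z, ContinuousOn (fun s => ytil s z) (Icc τ T) := fun z =>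
    hyc.comp (continuousOn_id.prodMk continuousOn_const) (fun r hr => ⟨hr, mem_univ _⟩)
  -- FTC for fixed z
  have ftcz : ∀ (z : Fin n → ℝ), ∀ a ∈ Icc τ T, ∀ b ∈ Icc τ T,
      (∫ r in a..b, g r z) = ytil b z - ytil a z := by
    have key : ∀ (z : Fin n → ℝ), ∀ a ∈ Icc τ T, ∀ b ∈ Icc τ T, a ≤ b →
        (∫ r in a..b, g r z) = ytil b z - ytil a z := by
      intro z a ha b hb hab
      refine intervalIntegral.integral_eq_sub_of_hasDeriv_right_of_le hab
        ((hyzc z).mono (Icc_subset_Icc ha.1 hb.2)) ?_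
        (((hgz z).mono (uIcc_subset_Icc ha hb)).intervalIntegrable)
      intro u hu
      have hu' : u ∈ Icc τ T := ⟨le_trans ha.1 (le_of_lt hu.1), le_trans (le_of_lt hu.2) hb.2⟩
      have h1 := hpde u hu' z
      have h2 : g u z = dirDeriv (ytil u) z (ηb u z + ytil u z) - Fb u z (ytil u z) :=
        gval u hu' z
      rw [h2]
      have hmem : Icc τ T ∈ nhds u :=
        Icc_mem_nhds (lt_of_le_of_lt ha.1 hu.1) (lt_of_lt_of_le hu.2 hb.2)
      exact (h1.hasDerivAt hmem).hasDerivWithinAt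
    intro z a ha b hb
    rcases le_total a b with hab | hab
    · exact key z a ha b hb hab
    · rw [intervalIntegral.integral_symm, key z b hb a ha hab, neg_sub]
  -- derivative of Xt
  have hXd : ∀ t ∈ Icc τ T, HasDerivWithinAt Xt (-(G t)) (Icc τ T) t := by
    intro t ht
    haveI : Fact (t ∈ Icc τ T) := ⟨ht⟩
    have hGi : IntervalIntegrable G volume τ t :=
      (hGc.mono (uIcc_subset_Icc ⟨le_rfl, le_of_lt hτT⟩ ht)).intervalIntegrable
    have hmeas : StronglyMeasurableAtFilter G (nhdsWithin t (Icc τ T)) volume :=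
      hGc.stronglyMeasurableAtFilter_nhdsWithin measurableSet_Icc t
    have h1 : HasDerivWithinAt (fun u => ∫ s in τ..u, G s) (G t) (Icc τ T) t :=
      intervalIntegral.integral_hasDerivWithinAt_right hGi hmeas (hGc t ht)
    have h2 := h1.const_sub x
    exact h2.congr (fun u hu => hXeq u hu) (hXeq t ht)
  -- derivative of Y
  have hYd : ∀ t ∈ Icc τ T, HasDerivWithinAt Y (-(Fb t (Xt t) (Y t))) (Icc τ T) t := by
    intro t ht
    have h2 : HasDerivWithinAt (fun s => ytil t (Xt s))
        (fderiv ℝ (ytil t) (Xt t) (-(G t))) (Icc τ T) t :=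
      ((hyx t ht (Xt t)).hasFDerivAt).comp_hasDerivWithinAt t (hXd t ht)
    have h3 : HasDerivWithinAt (fun s => ∫ r in t..s, g r (Xt s)) (g t (Xt t))
        (Icc τ T) t :=
      hasDerivWithinAt_intervalIntegral_comp g hytc Xt hXc ht
    have h4 := h3.add h2
    have h5 : ∀ s ∈ Icc τ T, Y s = (∫ r in t..s, g r (Xt s)) + ytil t (Xt s) := by
      intro s hs
      rw [ftcz (Xt s) t ht s hs]
      simp [hYdef]
    have h6 := h4.congr h5 (h5 t ht)
    have hval : g t (Xt t) + fderiv ℝ (ytil t) (Xt t) (-(G t)) = -(Fb t (Xt t) (Y t)) := by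
      rw [gval t ht (Xt t), map_neg]
      have : fderiv ℝ (ytil t) (Xt t) (G t) = dirDeriv (ytil t) (Xt t) (G t) := rfl
      rw [this]
      simp only [hGdef, hYdef]
      abel
    rwa [hval] at h6
  refine ⟨hXc, hYc, fun t ht => hXeq t ht, ?_⟩
  intro t ht
  have hTm : T ∈ Icc τ T := ⟨le_of_lt hτT, le_rfl⟩
  have hint : IntervalIntegrable (fun s => -(Fb s (Xt s) (Y s))) volume t T :=
    ((hFbc.neg).mono (uIcc_subset_Icc ht hTm)).intervalIntegrable
  have hkey : (∫ s in t..T, -(Fb s (Xt s) (Y s))) = Y T - Y t := by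
    refine intervalIntegral.integral_eq_sub_of_hasDeriv_right_of_le ht.2
      (hYc.mono (Icc_subset_Icc ht.1 le_rfl)) ?_ hint
    intro u hu
    have hu' : u ∈ Icc τ T := ⟨le_trans ht.1 (le_of_lt hu.1), le_of_lt hu.2⟩
    have hmem : Icc τ T ∈ nhds u := Icc_mem_nhds (lt_of_le_of_lt ht.1 hu.1) hu.2
    exact ((hYd u hu').hasDerivAt hmem).hasDerivWithinAt
  rw [intervalIntegral.integral_neg] at hkey
  have hYT : Y T = h (Xt T) := hyT (Xt T)
  have : Y t = Y T + ∫ s in t..T, Fb s (Xt s) (Y s) := by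
    have h7 : Y t - Y T = ∫ s in t..T, Fb s (Xt s) (Y s) := by
      have := congrArg Neg.neg hkey
      rw [neg_neg, neg_sub] at this
      exact this.symm
    exact (sub_eq_iff_eq_add'.mp h7)
  rw [hYT] at this
  exact this
end

section
/- Let (Ω,𝓕) be a measurable space equipped with a filtration (𝓕_t)_{t∈[0,T]}, let m ∈ ℕ with m ≥ 1, and let x ∈ ℝⁿ be fixed. Let η : Ω×ℝ → ℝⁿ satisfy: (i) for each ω, the map t ↦ η(ω,t) is continuous and bounded; (ii) η(ω,t) = 0 for all t ≤ 0 and η(ω,t) = η(ω,T) for all t ≥ T; (iii) for each t ∈ [0,T], the map ω ↦ η(ω,t) is 𝓕_t-measurable. Let φ : ℝ → ℝ be continuous, nonnegative, supported in [−1/m, 1/m], with ∫_ℝ φ = 1. Then for every t ∈ [0,T], the mollification η_m(ω,t) := ∫_ℝ η(ω, t−s) φ(s) ds is well-defined and the map ω ↦ η_m(ω,t) is 𝓕_{min(t+1/m, T)}-measurable. -/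
open Set MeasureTheory

/-- Measurability of the time-mollification of an adapted, pathwise continuous
process: `η_m(·,t)` is `𝓕_{min(t+1/m, T)}`-measurable. -/
theorem stmt_16 {n : ℕ} (hn : 1 ≤ n) {Ω : Type*} [mΩ : MeasurableSpace Ω]
    (T : ℝ) (hT : 0 < T)
    (ℱ : ℝ → MeasurableSpace Ω)
    (hmono : ∀ s t : ℝ, s ≤ t → ℱ s ≤ ℱ t)
    (hle : ∀ t : ℝ, ℱ t ≤ mΩ)
    (m : ℕ) (hm : 1 ≤ m) (x : Fin n → ℝ)
    (η : Ω → ℝ → Fin n → ℝ)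
    (hcont : ∀ ω, Continuous (η ω))
    (hbdd : ∀ ω, ∃ M : ℝ, ∀ t : ℝ, ‖η ω t‖ ≤ M)
    (h0 : ∀ ω, ∀ t : ℝ, t ≤ 0 → η ω t = 0)
    (hTc : ∀ ω, ∀ t : ℝ, T ≤ t → η ω t = η ω T)
    (hadapted : ∀ t ∈ Icc (0:ℝ) T, Measurable[ℱ t] (fun ω => η ω t))
    (φ : ℝ → ℝ)
    (hφc : Continuous φ)
    (hφ0 : ∀ s, 0 ≤ φ s)
    (hφsupp : ∀ s : ℝ, φ s ≠ 0 → |s| ≤ 1 / (m : ℝ))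
    (hφint : ∫ s : ℝ, φ s = 1) :
    ∀ t ∈ Icc (0:ℝ) T,
      (∀ ω, Integrable (fun s : ℝ => φ s • η ω (t - s))) ∧
      Measurable[ℱ (min (t + 1 / (m : ℝ)) T)]
        (fun ω => ∫ s : ℝ, φ s • η ω (t - s)) := by
  intro t ht
  have hminv : (0:ℝ) < 1 / (m : ℝ) := by positivity
  constructor
  · intro ω
    apply Continuous.integrable_of_hasCompactSupport
    · exact (hφc.smul ((hcont ω).comp (continuous_const.sub continuous_id)))
    · apply HasCompactSupport.intro (isCompact_Icc (a := -(1/(m:ℝ))) (b := 1/(m:ℝ)))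
      intro s hs
      have : φ s = 0 := by
        by_contra h
        exact hs (abs_le.mp (hφsupp s h))
      simp [this]
  · -- measurability
    set 𝓖 := ℱ (min (t + 1 / (m : ℝ)) T) with h𝓖
    -- each slice is 𝓖-measurable
    have key : ∀ s : ℝ, StronglyMeasurable[𝓖] (fun ω => φ s • η ω (t - s)) := by
      intro s
      by_cases hφs : φ s = 0
      · simp only [hφs, zero_smul]
        exact stronglyMeasurable_const
      · have hsabs := abs_le.mp (hφsupp s hφs)
        have hle1 : t - s ≤ t + 1 / (m : ℝ) := by linarith [hsabs.1]
        have hmeas : Measurable[𝓖] (fun ω => η ω (t - s)) := by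
          rcases le_or_gt (t - s) 0 with h1 | h1
          · have : (fun ω => η ω (t - s)) = fun _ => (0 : Fin n → ℝ) := by
              funext ω; exact h0 ω _ h1
            rw [this]; exact measurable_const
          · rcases le_or_gt (t - s) T with h2 | h2
            · have := hadapted (t - s) ⟨le_of_lt h1, h2⟩
              exact this.mono (hmono _ _ (le_min hle1 h2)) le_rfl
            · -- t - s > T, so min (t+1/m) T = T
              have hTle : T ≤ t + 1 / (m : ℝ) := le_trans (le_of_lt h2) hle1
              have hminT : min (t + 1 / (m : ℝ)) T = T := min_eq_right hTle
              have : (fun ω => η ω (t - s)) = fun ω => η ω T := by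
                funext ω; exact hTc ω _ h2.le
              rw [this]
              have := hadapted T ⟨hT.le, le_refl T⟩
              rw [h𝓖, hminT]; exact this
        exact (Measurable.stronglyMeasurable hmeas).const_smul' (φ s)
    have huncurry : StronglyMeasurable[(inferInstance : MeasurableSpace ℝ).prod 𝓖]
        (Function.uncurry (fun s ω => φ s • η ω (t - s))) := by
      apply stronglyMeasurable_uncurry_of_continuous_of_stronglyMeasurable
      · intro ω
        exact hφc.smul ((hcont ω).comp (continuous_const.sub continuous_id))
      · exact key
    have := huncurry.integral_prod_left (μ := (volume : Measure ℝ))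
    exact this.measurable
end

section
/- Let (η̄, F̄, h) and (η̄', F̄', h') be two triples of continuous data, each K-Lipschitz in the spatial variables (|η̄(t,x)−η̄(t,x')| ≤ K|x−x'|, |h(x)−h(x')| ≤ K|x−x'|, |F̄(t,x,y)−F̄(t,x',y')| ≤ K(|x−x'|+|y−y'|), and the same for the primed data), and with |h|, |h'| ≤ C₁ and |F̄(t,x,y)|, |F̄'(t,x,y)| ≤ C₁(1+|y|). Then there exist constants γ'_K > 0, depending only on K, and μ > 0, depending only on K, C₁ and T, such that for every τ ∈ [0,T] with T−τ ≤ γ'_K and every x ∈ ℝⁿ: if (X,Y) is a continuous solution on [τ,T] of the forward–backward system with data (η̄, F̄, h) and initial point x, and (X',Y') is a continuous solution on [τ,T] of the forward–backward system with data (η̄', F̄', h') and initial point x, then sup_{t∈[τ,T]} (|X_t − X'_t|² + |Y_t − Y'_t|²) ≤ μ ( |h(X_T) − h'(X_T)|² + ∫_τ^T ( |F̄(s,X_s,Y_s) − F̄'(s,X_s,Y_s)|² + |η̄(s,X_s) − η̄'(s,X_s)|² ) ds ). -/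
open Set MeasureTheory intervalIntegral

lemma cauchy_sq {a b : ℝ} (hab : a ≤ b) {f : ℝ → ℝ} (hf : ContinuousOn f (Icc a b)) :
    (∫ s in a..b, f s)^2 ≤ (b - a) * ∫ s in a..b, (f s)^2 := by
  rcases eq_or_lt_of_le hab with rfl | hlt
  · simp
  have hf' : ContinuousOn f (uIcc a b) := by rwa [uIcc_of_le hab]
  have h1 : IntervalIntegrable f volume a b := hf'.intervalIntegrable
  have h2 : IntervalIntegrable (fun s => (f s)^2) volume a b := (hf'.pow 2).intervalIntegrable
  set c : ℝ := (∫ s in a..b, f s) / (b - a) with hc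
  have key : 0 ≤ ∫ s in a..b, (f s - c)^2 :=
    intervalIntegral.integral_nonneg hab (fun u _ => sq_nonneg _)
  have expand : ∫ s in a..b, (f s - c)^2
      = (∫ s in a..b, (f s)^2) - 2*c*(∫ s in a..b, f s) + (b-a)*c^2 := by
    have hrw : ∀ s : ℝ, (f s - c)^2 = (f s)^2 - (2*c) * f s + c^2 := by intro s; ring
    simp_rw [hrw]
    rw [intervalIntegral.integral_add (h2.sub (h1.const_mul _)) intervalIntegrable_const,
        intervalIntegral.integral_sub h2 (h1.const_mul _),
        intervalIntegral.integral_const_mul, intervalIntegral.integral_const]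
    simp [smul_eq_mul]
  have hb0 : 0 < b - a := sub_pos.2 hlt
  rw [expand] at key
  have hcb : c * (b-a) = ∫ s in a..b, f s := by rw [hc, div_mul_cancel₀ _ hb0.ne']
  nlinarith [mul_nonneg hb0.le key]


lemma sum_sq_le3 {x y z u v : ℝ} (h1 : y^2 ≤ u) (h2 : z^2 ≤ v) :
    (x+y+z)^2 ≤ 3*(x^2+u+v) := by
  nlinarith [sq_nonneg (x-y), sq_nonneg (x-z), sq_nonneg (y-z)]

lemma scalar_bounds {K δ a b Eη EF eh : ℝ} (hK : 0 < K) (hδ0 : 0 ≤ δ) (hδ1 : δ ≤ 1)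
    (hδK : K*δ ≤ 1/10) (ha0 : 0 ≤ a) (hb0 : 0 ≤ b) (hEη0 : 0 ≤ Eη) (hEF0 : 0 ≤ EF)
    (heh0 : 0 ≤ eh) (I1 : a ≤ Eη + δ*(K*a+b)) (I2 : b ≤ (eh + K*a) + (EF + δ*(K*(a+b)))) :
    a ≤ 4*(1+K)*(eh+EF+Eη) ∧ b ≤ 4*(1+K)*(eh+EF+Eη) := by
  have e1 : (9/10) * a ≤ Eη + δ * b := by
    nlinarith [mul_nonneg (by linarith : (0:ℝ) ≤ 1/10 - K*δ) ha0, I1]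
  have e2 : (9/10) * b ≤ eh + EF + (K + 1/10) * a := by
    nlinarith [mul_nonneg (by linarith : (0:ℝ) ≤ 1/10 - K*δ) hb0,
      mul_nonneg (by linarith : (0:ℝ) ≤ 1/10 - K*δ) ha0, I2]
  have e3 : b ≤ 2*(1+K) * (eh+EF+Eη) := by
    nlinarith [e2, mul_le_mul_of_nonneg_left e1 (by linarith : (0:ℝ) ≤ K + 1/10),
      mul_nonneg (by linarith : (0:ℝ) ≤ 1/10 - K*δ) hb0,
      mul_nonneg (by linarith : (0:ℝ) ≤ 1 - δ) hb0,
      mul_nonneg hK.le heh0, mul_nonneg hK.le hEF0, mul_nonneg hK.le hEη0]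
  constructor
  · nlinarith [e1, e3, mul_nonneg (by linarith : (0:ℝ) ≤ 1 - δ) hb0,
      mul_nonneg hK.le heh0, mul_nonneg hK.le hEF0, mul_nonneg hK.le hEη0]
  · nlinarith [e3, mul_nonneg hK.le heh0, mul_nonneg hK.le hEF0, mul_nonneg hK.le hEη0]

set_option maxHeartbeats 1000000 in
/-- Stability estimate: the distance between the solutions of two forward–backward
systems with different data is controlled by the distance between the data along
the first solution. -/
theorem stmt_17 {n : ℕ} (hn : 1 ≤ n) (K : ℝ) (hK : 0 < K) :
    ∃ γ' : ℝ, 0 < γ' ∧ ∀ T : ℝ, 0 < T → ∀ C₁ : ℝ, 0 < C₁ →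
    ∃ μ : ℝ, 0 < μ ∧
    ∀ (ηb ηb' : ℝ → (Fin n → ℝ) → Fin n → ℝ)
      (Fb Fb' : ℝ → (Fin n → ℝ) → (Fin n → ℝ) → Fin n → ℝ)
      (h h' : (Fin n → ℝ) → Fin n → ℝ),
    ContinuousOn (fun p : ℝ × (Fin n → ℝ) => ηb p.1 p.2)
      (Icc (0:ℝ) T ×ˢ (univ : Set (Fin n → ℝ))) →
    ContinuousOn (fun p : ℝ × (Fin n → ℝ) => ηb' p.1 p.2)
      (Icc (0:ℝ) T ×ˢ (univ : Set (Fin n → ℝ))) →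
    ContinuousOn (fun p : ℝ × (Fin n → ℝ) × (Fin n → ℝ) => Fb p.1 p.2.1 p.2.2)
      (Icc (0:ℝ) T ×ˢ (univ : Set ((Fin n → ℝ) × (Fin n → ℝ)))) →
    ContinuousOn (fun p : ℝ × (Fin n → ℝ) × (Fin n → ℝ) => Fb' p.1 p.2.1 p.2.2)
      (Icc (0:ℝ) T ×ˢ (univ : Set ((Fin n → ℝ) × (Fin n → ℝ)))) →
    Continuous h → Continuous h' →
    (∀ t ∈ Icc (0:ℝ) T, ∀ x x', ‖ηb t x - ηb t x'‖ ≤ K * ‖x - x'‖) →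
    (∀ t ∈ Icc (0:ℝ) T, ∀ x x', ‖ηb' t x - ηb' t x'‖ ≤ K * ‖x - x'‖) →
    (∀ x x', ‖h x - h x'‖ ≤ K * ‖x - x'‖) →
    (∀ x x', ‖h' x - h' x'‖ ≤ K * ‖x - x'‖) →
    (∀ t ∈ Icc (0:ℝ) T, ∀ x x' v v',
      ‖Fb t x v - Fb t x' v'‖ ≤ K * (‖x - x'‖ + ‖v - v'‖)) →
    (∀ t ∈ Icc (0:ℝ) T, ∀ x x' v v',
      ‖Fb' t x v - Fb' t x' v'‖ ≤ K * (‖x - x'‖ + ‖v - v'‖)) →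
    (∀ x, ‖h x‖ ≤ C₁) → (∀ x, ‖h' x‖ ≤ C₁) →
    (∀ t ∈ Icc (0:ℝ) T, ∀ x v, ‖Fb t x v‖ ≤ C₁ * (1 + ‖v‖)) →
    (∀ t ∈ Icc (0:ℝ) T, ∀ x v, ‖Fb' t x v‖ ≤ C₁ * (1 + ‖v‖)) →
    ∀ τ : ℝ, 0 ≤ τ → τ ≤ T → T - τ ≤ γ' → ∀ x : Fin n → ℝ,
    ∀ X Y X' Y' : ℝ → Fin n → ℝ,
    FBSol T τ ηb Fb h x X Y → FBSol T τ ηb' Fb' h' x X' Y' →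
    ∀ t ∈ Icc τ T,
      ‖X t - X' t‖ ^ 2 + ‖Y t - Y' t‖ ^ 2 ≤
        μ * (‖h (X T) - h' (X T)‖ ^ 2 +
          ∫ s in τ..T, (‖Fb s (X s) (Y s) - Fb' s (X s) (Y s)‖ ^ 2 +
            ‖ηb s (X s) - ηb' s (X s)‖ ^ 2)) := by
  refine ⟨min 1 (1/(10*K)), by positivity, ?_⟩
  intro T hT C₁ hC₁
  refine ⟨100*(1+K)^2, by positivity, ?_⟩
  intro ηb ηb' Fb Fb' h h' hηc hη'c hFc hF'c hhc hh'c Lη Lη' Lh Lh' LF LF' _ _ _ _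
    τ hτ0 hτT hγ x X Y X' Y' solA sol'
  obtain ⟨cX, cY, hXe, hYe⟩ := solA
  obtain ⟨cX', cY', hX'e, hY'e⟩ := sol'
  intro t ht
  set δ : ℝ := T - τ with hδdef
  have hδ0 : 0 ≤ δ := by simp [hδdef]; linarith
  have hδ1 : δ ≤ 1 := le_trans hγ (min_le_left _ _)
  have hδK : K * δ ≤ 1/10 := by
    have h10 : δ ≤ 1/(10*K) := le_trans hγ (min_le_right _ _)
    have := (le_div_iff₀ (by positivity : (0:ℝ) < 10*K)).1 h10
    nlinarith
  have IccSub : Icc τ T ⊆ Icc (0:ℝ) T := Icc_subset_Icc hτ0 le_rfl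
  -- continuity of all composed curves on [τ,T]
  have contComp : ∀ (η : ℝ → (Fin n → ℝ) → Fin n → ℝ),
      ContinuousOn (fun p : ℝ × (Fin n → ℝ) => η p.1 p.2) (Icc (0:ℝ) T ×ˢ univ) →
      ∀ (Z : ℝ → Fin n → ℝ), ContinuousOn Z (Icc τ T) →
      ContinuousOn (fun s => η s (Z s)) (Icc τ T) := by
    intro η hη Z hZ
    exact hη.comp (continuousOn_id.prodMk hZ) (fun s hs => ⟨IccSub hs, mem_univ _⟩)
  have contCompF : ∀ (F : ℝ → (Fin n → ℝ) → (Fin n → ℝ) → Fin n → ℝ),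
      ContinuousOn (fun p : ℝ × (Fin n → ℝ) × (Fin n → ℝ) => F p.1 p.2.1 p.2.2)
        (Icc (0:ℝ) T ×ˢ (univ : Set ((Fin n → ℝ) × (Fin n → ℝ)))) →
      ∀ (Z W : ℝ → Fin n → ℝ), ContinuousOn Z (Icc τ T) → ContinuousOn W (Icc τ T) →
      ContinuousOn (fun s => F s (Z s) (W s)) (Icc τ T) := by
    intro F hF Z W hZ hW
    exact hF.comp (continuousOn_id.prodMk (hZ.prodMk hW)) (fun s hs => ⟨IccSub hs, mem_univ _⟩)
  have cG : ContinuousOn (fun s => ηb s (X s) + Y s) (Icc τ T) :=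
    (contComp ηb hηc X cX).add cY
  have cG' : ContinuousOn (fun s => ηb' s (X' s) + Y' s) (Icc τ T) :=
    (contComp ηb' hη'c X' cX').add cY'
  have cF : ContinuousOn (fun s => Fb s (X s) (Y s)) (Icc τ T) := contCompF Fb hFc X Y cX cY
  have cF' : ContinuousOn (fun s => Fb' s (X' s) (Y' s)) (Icc τ T) :=
    contCompF Fb' hF'c X' Y' cX' cY'
  have cF'₁ : ContinuousOn (fun s => Fb' s (X s) (Y s)) (Icc τ T) := contCompF Fb' hF'c X Y cX cY
  have ceη : ContinuousOn (fun s => ‖ηb s (X s) - ηb' s (X s)‖) (Icc τ T) :=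
    ((contComp ηb hηc X cX).sub (contComp ηb' hη'c X cX)).norm
  have ceF : ContinuousOn (fun s => ‖Fb s (X s) (Y s) - Fb' s (X s) (Y s)‖) (Icc τ T) :=
    (cF.sub cF'₁).norm
  -- integrability helper
  have intOn : ∀ {E : Type} [inst : NormedAddCommGroup E] (g : ℝ → E),
      ContinuousOn g (Icc τ T) → ∀ u v, u ∈ Icc τ T → v ∈ Icc τ T →
      IntervalIntegrable g volume u v := by
    intro E inst g hg u v hu hv
    exact (hg.mono (uIcc_subset_Icc hu hv)).intervalIntegrable
  have hτTm : τ ∈ Icc τ T := ⟨le_rfl, hτT⟩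
  have hTm : T ∈ Icc τ T := ⟨hτT, le_rfl⟩
  -- max points
  obtain ⟨t₁, ht₁, ha⟩ := isCompact_Icc.exists_isMaxOn (nonempty_Icc.mpr hτT)
    ((cX.sub cX').norm : ContinuousOn (fun u => ‖X u - X' u‖) (Icc τ T))
  obtain ⟨t₂, ht₂, hb⟩ := isCompact_Icc.exists_isMaxOn (nonempty_Icc.mpr hτT)
    ((cY.sub cY').norm : ContinuousOn (fun u => ‖Y u - Y' u‖) (Icc τ T))
  set a : ℝ := ‖X t₁ - X' t₁‖ with hadef
  set b : ℝ := ‖Y t₂ - Y' t₂‖ with hbdef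
  have ha0 : 0 ≤ a := norm_nonneg _
  have hb0 : 0 ≤ b := norm_nonneg _
  set Eη : ℝ := ∫ s in τ..T, ‖ηb s (X s) - ηb' s (X s)‖ with hEηdef
  set EF : ℝ := ∫ s in τ..T, ‖Fb s (X s) (Y s) - Fb' s (X s) (Y s)‖ with hEFdef
  set eh : ℝ := ‖h (X T) - h' (X T)‖ with hehdef
  have hEη0 : 0 ≤ Eη := intervalIntegral.integral_nonneg hτT (fun s _ => norm_nonneg _)
  have hEF0 : 0 ≤ EF := intervalIntegral.integral_nonneg hτT (fun s _ => norm_nonneg _)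
  have heh0 : 0 ≤ eh := norm_nonneg _
  have hKab : 0 ≤ K * a + b := by positivity
  have hKab' : 0 ≤ K * (a + b) := by positivity
  -- Step A
  have stepA : ∀ u ∈ Icc τ T, ‖X u - X' u‖ ≤ Eη + δ * (K * a + b) := by
    intro u hu
    have hτu : τ ≤ u := hu.1
    have huT : u ≤ T := hu.2
    have hGi := intOn (fun s => ηb s (X s) + Y s) cG τ u hτTm hu
    have hG'i := intOn (fun s => ηb' s (X' s) + Y' s) cG' τ u hτTm hu
    have hdiff : X u - X' u
        = ∫ s in τ..u, ((ηb' s (X' s) + Y' s) - (ηb s (X s) + Y s)) := by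
      rw [hXe u hu, hX'e u hu, intervalIntegral.integral_sub hG'i hGi]
      abel
    calc ‖X u - X' u‖
        = ‖∫ s in τ..u, ((ηb' s (X' s) + Y' s) - (ηb s (X s) + Y s))‖ := by rw [hdiff]
      _ ≤ ∫ s in τ..u, ‖(ηb' s (X' s) + Y' s) - (ηb s (X s) + Y s)‖ :=
          intervalIntegral.norm_integral_le_integral_norm hτu
      _ ≤ ∫ s in τ..u, (‖ηb s (X s) - ηb' s (X s)‖ + (K * a + b)) := by
          apply intervalIntegral.integral_mono_on hτu
            (intOn _ (cG'.sub cG).norm τ u hτTm hu)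
            ((intOn _ ceη τ u hτTm hu).add intervalIntegrable_const)
          intro s hs
          have hsT : s ∈ Icc τ T := ⟨hs.1, hs.2.trans huT⟩
          have h1 : ‖ηb' s (X' s) - ηb' s (X s)‖ ≤ K * ‖X' s - X s‖ := Lη' s (IccSub hsT) _ _
          have h2 : ‖X' s - X s‖ ≤ a := by rw [norm_sub_rev]; exact ha hsT
          have h3 : ‖Y' s - Y s‖ ≤ b := by rw [norm_sub_rev]; exact hb hsT
          have hre : (ηb' s (X' s) + Y' s) - (ηb s (X s) + Y s)
              = (ηb' s (X' s) - ηb' s (X s)) + ((ηb' s (X s) - ηb s (X s)) + (Y' s - Y s)) := by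
            abel
          simp only [Pi.sub_apply]
          rw [hre]
          have h4 : ‖ηb' s (X s) - ηb s (X s)‖ = ‖ηb s (X s) - ηb' s (X s)‖ := norm_sub_rev _ _
          have h5 := norm_add_le (ηb' s (X' s) - ηb' s (X s))
            ((ηb' s (X s) - ηb s (X s)) + (Y' s - Y s))
          have h6 := norm_add_le (ηb' s (X s) - ηb s (X s)) (Y' s - Y s)
          have h7 : K * ‖X' s - X s‖ ≤ K * a := mul_le_mul_of_nonneg_left h2 hK.le
          linarith
      _ = (∫ s in τ..u, ‖ηb s (X s) - ηb' s (X s)‖) + (u - τ) * (K * a + b) := by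
          rw [intervalIntegral.integral_add (intOn _ ceη τ u hτTm hu) intervalIntegrable_const,
            intervalIntegral.integral_const]
          simp [smul_eq_mul]
      _ ≤ Eη + δ * (K * a + b) := by
          have hm : (∫ s in τ..u, ‖ηb s (X s) - ηb' s (X s)‖) ≤ Eη :=
            intervalIntegral.integral_mono_interval le_rfl hτu huT
              (ae_of_all _ (fun s => norm_nonneg _)) (intOn _ ceη τ T hτTm hTm)
          have hm2 : (u - τ) * (K * a + b) ≤ δ * (K * a + b) :=
            mul_le_mul_of_nonneg_right (by simp [hδdef]; linarith) hKab
          linarith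
  -- Step B
  have stepB : ∀ u ∈ Icc τ T, ‖Y u - Y' u‖ ≤ (eh + K * a) + (EF + δ * (K * (a + b))) := by
    intro u hu
    have hτu : τ ≤ u := hu.1
    have huT : u ≤ T := hu.2
    have hFi := intOn (fun s => Fb s (X s) (Y s)) cF u T hu hTm
    have hF'i := intOn (fun s => Fb' s (X' s) (Y' s)) cF' u T hu hTm
    have hdiff : Y u - Y' u
        = (h (X T) - h' (X' T))
          + ∫ s in u..T, (Fb s (X s) (Y s) - Fb' s (X' s) (Y' s)) := by
      rw [hYe u hu, hY'e u hu, intervalIntegral.integral_sub hFi hF'i]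
      abel
    have hheadb : ‖h (X T) - h' (X' T)‖ ≤ eh + K * a := by
      have h1 : ‖h' (X T) - h' (X' T)‖ ≤ K * ‖X T - X' T‖ := Lh' _ _
      have h2 : ‖X T - X' T‖ ≤ a := ha hTm
      have h3 := norm_add_le (h (X T) - h' (X T)) (h' (X T) - h' (X' T))
      have h4 : h (X T) - h' (X' T)
          = (h (X T) - h' (X T)) + (h' (X T) - h' (X' T)) := by abel
      rw [h4]
      have h7 : K * ‖X T - X' T‖ ≤ K * a := mul_le_mul_of_nonneg_left h2 hK.le
      simp only [hehdef] at *
      linarith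
    have htail : ‖∫ s in u..T, (Fb s (X s) (Y s) - Fb' s (X' s) (Y' s))‖
        ≤ EF + δ * (K * (a + b)) := by
      calc ‖∫ s in u..T, (Fb s (X s) (Y s) - Fb' s (X' s) (Y' s))‖
          ≤ ∫ s in u..T, ‖Fb s (X s) (Y s) - Fb' s (X' s) (Y' s)‖ :=
            intervalIntegral.norm_integral_le_integral_norm huT
        _ ≤ ∫ s in u..T, (‖Fb s (X s) (Y s) - Fb' s (X s) (Y s)‖ + K * (a + b)) := by
            apply intervalIntegral.integral_mono_on huT
              (intOn _ (cF.sub cF').norm u T hu hTm)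
              ((intOn _ ceF u T hu hTm).add intervalIntegrable_const)
            intro s hs
            have hsT : s ∈ Icc τ T := ⟨hτu.trans hs.1, hs.2⟩
            have h1 : ‖Fb' s (X s) (Y s) - Fb' s (X' s) (Y' s)‖
                ≤ K * (‖X s - X' s‖ + ‖Y s - Y' s‖) := LF' s (IccSub hsT) _ _ _ _
            have h2 : ‖X s - X' s‖ ≤ a := ha hsT
            have h3 : ‖Y s - Y' s‖ ≤ b := hb hsT
            have hre : Fb s (X s) (Y s) - Fb' s (X' s) (Y' s)
                = (Fb s (X s) (Y s) - Fb' s (X s) (Y s))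
                  + (Fb' s (X s) (Y s) - Fb' s (X' s) (Y' s)) := by abel
            simp only [Pi.sub_apply]
            rw [hre]
            have h5 := norm_add_le (Fb s (X s) (Y s) - Fb' s (X s) (Y s))
              (Fb' s (X s) (Y s) - Fb' s (X' s) (Y' s))
            have h7 : K * (‖X s - X' s‖ + ‖Y s - Y' s‖) ≤ K * (a + b) :=
              mul_le_mul_of_nonneg_left (by linarith) hK.le
            linarith
        _ = (∫ s in u..T, ‖Fb s (X s) (Y s) - Fb' s (X s) (Y s)‖) + (T - u) * (K * (a + b)) := by
            rw [intervalIntegral.integral_add (intOn _ ceF u T hu hTm) intervalIntegrable_const,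
              intervalIntegral.integral_const]
            simp [smul_eq_mul]
        _ ≤ EF + δ * (K * (a + b)) := by
            have hm : (∫ s in u..T, ‖Fb s (X s) (Y s) - Fb' s (X s) (Y s)‖) ≤ EF :=
              intervalIntegral.integral_mono_interval hτu huT le_rfl
                (ae_of_all _ (fun s => norm_nonneg _)) (intOn _ ceF τ T hτTm hTm)
            have hm2 : (T - u) * (K * (a + b)) ≤ δ * (K * (a + b)) :=
              mul_le_mul_of_nonneg_right (by simp [hδdef]; linarith) hKab'
            linarith
    calc ‖Y u - Y' u‖ ≤ ‖h (X T) - h' (X' T)‖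
          + ‖∫ s in u..T, (Fb s (X s) (Y s) - Fb' s (X' s) (Y' s))‖ := by
            rw [hdiff]; exact norm_add_le _ _
      _ ≤ (eh + K * a) + (EF + δ * (K * (a + b))) := add_le_add hheadb htail
  -- scalar inequalities
  have I1 : a ≤ Eη + δ * (K * a + b) := stepA t₁ ht₁
  have I2 : b ≤ (eh + K * a) + (EF + δ * (K * (a + b))) := stepB t₂ ht₂
  set Qη : ℝ := ∫ s in τ..T, ‖ηb s (X s) - ηb' s (X s)‖^2 with hQηdef
  set QF : ℝ := ∫ s in τ..T, ‖Fb s (X s) (Y s) - Fb' s (X s) (Y s)‖^2 with hQFdef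
  have hQη0 : 0 ≤ Qη := intervalIntegral.integral_nonneg hτT (fun s _ => sq_nonneg _)
  have hQF0 : 0 ≤ QF := intervalIntegral.integral_nonneg hτT (fun s _ => sq_nonneg _)
  have hcsEη : Eη^2 ≤ δ * Qη := cauchy_sq hτT ceη
  have hcsEF : EF^2 ≤ δ * QF := cauchy_sq hτT ceF
  have hQsplit : (∫ s in τ..T, (‖Fb s (X s) (Y s) - Fb' s (X s) (Y s)‖ ^ 2 +
      ‖ηb s (X s) - ηb' s (X s)‖ ^ 2)) = QF + Qη := by
    rw [hQFdef, hQηdef,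
      ← intervalIntegral.integral_add (f := fun s => ‖Fb s (X s) (Y s) - Fb' s (X s) (Y s)‖ ^ 2)
        (g := fun s => ‖ηb s (X s) - ηb' s (X s)‖ ^ 2) ((ceF.pow 2).mono (uIcc_subset_Icc hτTm hTm)).intervalIntegrable
        ((ceη.pow 2).mono (uIcc_subset_Icc hτTm hTm)).intervalIntegrable]
  have hφ : ‖X t - X' t‖ ≤ a := ha ht
  have hψ : ‖Y t - Y' t‖ ≤ b := hb ht
  rw [hQsplit]
  set p : ℝ := ‖X t - X' t‖ with hpdef
  set q : ℝ := ‖Y t - Y' t‖ with hqdef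
  have hp0 : 0 ≤ p := norm_nonneg _
  have hq0 : 0 ≤ q := norm_nonneg _
  clear_value p q δ a b Eη EF eh Qη QF
  obtain ⟨e4, e3'⟩ := scalar_bounds hK hδ0 hδ1 hδK ha0 hb0 hEη0 hEF0 heh0 I1 I2
  have hEη2 : Eη^2 ≤ Qη := by
    nlinarith [hcsEη, mul_nonneg (by linarith : (0:ℝ) ≤ 1 - δ) hQη0]
  have hEF2 : EF^2 ≤ QF := by
    nlinarith [hcsEF, mul_nonneg (by linarith : (0:ℝ) ≤ 1 - δ) hQF0]
  have hS2 : (eh+EF+Eη)^2 ≤ 3*(eh^2 + QF + Qη) := sum_sq_le3 hEF2 hEη2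
  have hS0 : (0:ℝ) ≤ eh+EF+Eη := by positivity
  calc p ^ 2 + q ^ 2
      ≤ a^2 + b^2 :=
        add_le_add (pow_le_pow_left₀ hp0 hφ 2) (pow_le_pow_left₀ hq0 hψ 2)
    _ ≤ (4*(1+K)*(eh+EF+Eη))^2 + (4*(1+K)*(eh+EF+Eη))^2 :=
        add_le_add (pow_le_pow_left₀ ha0 e4 2) (pow_le_pow_left₀ hb0 e3' 2)
    _ = 32*(1+K)^2 * (eh+EF+Eη)^2 := by ring
    _ ≤ 32*(1+K)^2 * (3*(eh^2 + QF + Qη)) :=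
        mul_le_mul_of_nonneg_left hS2 (by positivity)
    _ = 96*(1+K)^2 * (eh^2 + (QF + Qη)) := by ring
    _ ≤ 100*(1+K)^2 * (eh^2 + (QF + Qη)) := by
        have hE : (0:ℝ) ≤ eh^2 + (QF + Qη) := by positivity
        have h96 : (96:ℝ)*(1+K)^2 ≤ 100*(1+K)^2 := by nlinarith [sq_nonneg (1+K)]
        exact mul_le_mul_of_nonneg_right h96 hE
end
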